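/- arXiv:1911.06275 — 2 statements merged into one kernel-verified Lean document; each statement's English description precedes it below -/
import Mathlib

section
/- For every admissible order n (i.e., n ≡ 0 or 1 (mod 3) and n >= 6), there exists a 3-star system of order n that is 2-chromatic and admits an equitable 2-colouring (colour class sizes differ by at most one). -/
structure EStar (n e : ℕ) where
  centre : Fin n
  leaves : Finset (Fin n)
  card_leaves : leaves.card = e
  centre_not_leaf : centre ∉ leaves

instance {n e : ℕ} : DecidableEq (EStar n e) := fun a b =>
  decidable_of_iff (a.centre = b.centre ∧ a.leaves = b.leaves)
    (by cases a; cases b; simp)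

/-- The edge set of an `e`-star: all edges joining the centre to a leaf. -/
def EStar.edges {n e : ℕ} (S : EStar n e) : Finset (Sym2 (Fin n)) :=
  S.leaves.image (fun a => s(S.centre, a))

/-- The vertex set of an `e`-star. -/
def EStar.verts {n e : ℕ} (S : EStar n e) : Finset (Fin n) :=
  insert S.centre S.leaves

/-- An `e`-star system of order `n`: a collection of `e`-stars whose edge sets
partition the edge set of the complete graph `K_n`. -/
structure EStarSystem (n e : ℕ) where
  stars : Finset (EStar n e)
  partition : ∀ p : Sym2 (Fin n), ¬ p.IsDiag →
    ∃! S, S ∈ stars ∧ p ∈ EStar.edges S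

/-- A weak colouring: no star of the system has all of its vertices one colour. -/
def IsWeakColouring {n e k : ℕ} (sys : EStarSystem n e) (c : Fin n → Fin k) : Prop :=
  ∀ S ∈ sys.stars, ∃ a ∈ S.leaves, c a ≠ c S.centre

def Colourable {n e : ℕ} (sys : EStarSystem n e) (k : ℕ) : Prop :=
  ∃ c : Fin n → Fin k, IsWeakColouring sys c

def Chromatic {n e : ℕ} (sys : EStarSystem n e) (k : ℕ) : Prop :=
  Colourable sys k ∧ ¬ Colourable sys (k - 1)

/-- The size of the colour class of colour `i`. -/
def classCard {n k : ℕ} (c : Fin n → Fin k) (i : Fin k) : ℕ :=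
  (Finset.univ.filter (fun v => c v = i)).card

def UniquelyColourable {n e : ℕ} (sys : EStarSystem n e) (k : ℕ) : Prop :=
  ∀ c₁ c₂ : Fin n → Fin k, IsWeakColouring sys c₁ → IsWeakColouring sys c₂ →
    ∃ π : Equiv.Perm (Fin k), c₂ = π ∘ c₁

/-! ### Auxiliary development -/

def PartitionProp {n : ℕ} (stars : Finset (EStar n 3)) : Prop :=
  ∀ p : Sym2 (Fin n), ¬ p.IsDiag → ∃! S, S ∈ stars ∧ p ∈ EStar.edges S

/-- A "good" order: there is a star system together with a weak 2-colouring whose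
colour classes have sizes `⌈n/2⌉` and `⌊n/2⌋`. -/
def Good (n : ℕ) : Prop :=
  ∃ stars : Finset (EStar n 3), PartitionProp stars ∧
    ∃ c : Fin n → Fin 2, (∀ S ∈ stars, ∃ a ∈ S.leaves, c a ≠ c S.centre) ∧
      classCard c 0 = (n + 1) / 2 ∧ classCard c 1 = n / 2

lemma partition_of_filter {n : ℕ} (stars : Finset (EStar n 3))
    (h : ∀ p ∈ (Finset.univ : Finset (Sym2 (Fin n))).filter (fun p => ¬ p.IsDiag),
      (stars.filter (fun S => p ∈ S.edges)).card = 1) :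
    PartitionProp stars := by
  intro p hp
  have hmem : p ∈ (Finset.univ : Finset (Sym2 (Fin n))).filter (fun p => ¬ p.IsDiag) := by
    simp [hp]
  obtain ⟨a, ha⟩ := Finset.card_eq_one.mp (h p hmem)
  have haf : a ∈ stars.filter (fun S => p ∈ S.edges) := ha ▸ Finset.mem_singleton_self a
  simp only [Finset.mem_filter] at haf
  refine ⟨a, haf, ?_⟩
  intro b hb
  have : b ∈ stars.filter (fun S => p ∈ S.edges) := by
    simp only [Finset.mem_filter]; exact hb
  rw [ha, Finset.mem_singleton] at this
  exact this

lemma mem_edges_iff {n : ℕ} {S : EStar n 3} {p : Sym2 (Fin n)} :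
    p ∈ S.edges ↔ ∃ a ∈ S.leaves, p = s(S.centre, a) := by
  simp [EStar.edges, eq_comm]

def mapStar {a b : ℕ} (f : Fin a ↪ Fin b) (S : EStar a 3) : EStar b 3 where
  centre := f S.centre
  leaves := S.leaves.map f
  card_leaves := by rw [Finset.card_map]; exact S.card_leaves
  centre_not_leaf := by
    simp only [Finset.mem_map]
    rintro ⟨x, hx, hfx⟩
    exact S.centre_not_leaf ((f.injective hfx) ▸ hx)

lemma mem_edges_mapStar {a b : ℕ} (f : Fin a ↪ Fin b) (S : EStar a 3) {p : Sym2 (Fin b)} :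
    p ∈ (mapStar f S).edges ↔ ∃ x ∈ S.leaves, p = s(f S.centre, f x) := by
  simp [mapStar, mem_edges_iff]

/-! ### Base cases -/

def stars6 : Finset (EStar 6 3) :=
  {⟨0, {1, 2, 5}, by decide, by decide⟩,
   ⟨1, {2, 3, 5}, by decide, by decide⟩,
   ⟨2, {3, 4, 5}, by decide, by decide⟩,
   ⟨3, {4, 0, 5}, by decide, by decide⟩,
   ⟨4, {0, 1, 5}, by decide, by decide⟩}

def stars7 : Finset (EStar 7 3) :=
  {⟨0, {1, 2, 3}, by decide, by decide⟩,
   ⟨1, {2, 3, 4}, by decide, by decide⟩,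
   ⟨2, {3, 4, 5}, by decide, by decide⟩,
   ⟨3, {4, 5, 6}, by decide, by decide⟩,
   ⟨4, {5, 6, 0}, by decide, by decide⟩,
   ⟨5, {6, 0, 1}, by decide, by decide⟩,
   ⟨6, {0, 1, 2}, by decide, by decide⟩}

def stars9 : Finset (EStar 9 3) :=
  {⟨0, {1, 2, 5}, by decide, by decide⟩,
   ⟨1, {2, 3, 5}, by decide, by decide⟩,
   ⟨2, {3, 4, 5}, by decide, by decide⟩,
   ⟨3, {4, 0, 5}, by decide, by decide⟩,
   ⟨4, {0, 1, 5}, by decide, by decide⟩,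
   ⟨5, {6, 7, 8}, by decide, by decide⟩,
   ⟨6, {7, 3, 4}, by decide, by decide⟩,
   ⟨7, {8, 3, 4}, by decide, by decide⟩,
   ⟨8, {6, 3, 4}, by decide, by decide⟩,
   ⟨6, {0, 1, 2}, by decide, by decide⟩,
   ⟨7, {0, 1, 2}, by decide, by decide⟩,
   ⟨8, {0, 1, 2}, by decide, by decide⟩}

def stars10 : Finset (EStar 10 3) :=
  {⟨0, {1, 2, 3}, by decide, by decide⟩,
   ⟨1, {2, 3, 4}, by decide, by decide⟩,
   ⟨2, {3, 4, 5}, by decide, by decide⟩,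
   ⟨3, {4, 5, 6}, by decide, by decide⟩,
   ⟨4, {5, 6, 0}, by decide, by decide⟩,
   ⟨5, {6, 0, 1}, by decide, by decide⟩,
   ⟨6, {0, 1, 2}, by decide, by decide⟩,
   ⟨7, {8, 5, 6}, by decide, by decide⟩,
   ⟨8, {9, 5, 6}, by decide, by decide⟩,
   ⟨9, {7, 5, 6}, by decide, by decide⟩,
   ⟨0, {7, 8, 9}, by decide, by decide⟩,
   ⟨1, {7, 8, 9}, by decide, by decide⟩,
   ⟨7, {2, 3, 4}, by decide, by decide⟩,
   ⟨8, {2, 3, 4}, by decide, by decide⟩,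
   ⟨9, {2, 3, 4}, by decide, by decide⟩}

def parity (n : ℕ) : Fin n → Fin 2 := fun v => ⟨v.val % 2, Nat.mod_lt _ (by norm_num)⟩

lemma stars6_part : PartitionProp stars6 := partition_of_filter _ (by decide)
lemma stars7_part : PartitionProp stars7 := partition_of_filter _ (by decide)
lemma stars9_part : PartitionProp stars9 := partition_of_filter _ (by decide)
lemma stars10_part : PartitionProp stars10 := partition_of_filter _ (by decide)

lemma good6 : Good 6 :=
  ⟨stars6, stars6_part, parity 6, by decide, by decide, by decide⟩
lemma good7 : Good 7 :=
  ⟨stars7, stars7_part, parity 7, by decide, by decide, by decide⟩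
lemma good9 : Good 9 :=
  ⟨stars9, stars9_part, parity 9, by decide, by decide, by decide⟩
lemma good10 : Good 10 :=
  ⟨stars10, stars10_part, parity 10, by decide, by decide, by decide⟩

/-! ### The step `n → n + 6` -/

section Step

variable {n : ℕ}

def eEmb (n : ℕ) : Fin n ↪ Fin (n + 6) := Fin.castLEEmb (Nat.le_add_right n 6)

def gEmb (n : ℕ) : Fin 6 ↪ Fin (n + 6) :=
  ⟨fun k => ⟨n + k.val, by omega⟩, by
    intro a b h
    simp only [Fin.mk.injEq] at h
    exact Fin.ext (by omega)⟩

@[simp] lemma eEmb_val (u : Fin n) : (eEmb n u).val = u.val := rfl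
@[simp] lemma gEmb_val (k : Fin 6) : (gEmb n k).val = n + k.val := rfl

def crossLeaves (n : ℕ) (b : Bool) : Finset (Fin (n + 6)) :=
  (if b then ({3, 4, 5} : Finset (Fin 6)) else {0, 1, 2}).map (gEmb n)

def crossStar (n : ℕ) (u : Fin n) (b : Bool) : EStar (n + 6) 3 where
  centre := eEmb n u
  leaves := crossLeaves n b
  card_leaves := by rw [crossLeaves, Finset.card_map]; cases b <;> decide
  centre_not_leaf := by
    simp only [crossLeaves, Finset.mem_map]
    rintro ⟨k, hk, h⟩
    have h1 : (gEmb n k).val = n + k.val := rfl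
    have h2 := u.isLt
    rw [h] at h1
    simp only [eEmb_val] at h1
    omega

lemma mem_crossLeaves {b : Bool} {v : Fin (n + 6)} :
    v ∈ crossLeaves n b ↔ ∃ k : Fin 6,
      (k ∈ (if b then ({3, 4, 5} : Finset (Fin 6)) else {0, 1, 2})) ∧ v = gEmb n k := by
  simp [crossLeaves, eq_comm]

def stepStars (stars : Finset (EStar n 3)) : Finset (EStar (n + 6) 3) :=
  stars.image (mapStar (eEmb n)) ∪ stars6.image (mapStar (gEmb n)) ∪
    Finset.image (fun x : Fin n × Bool => crossStar n x.1 x.2) Finset.univ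

lemma mem_stepStars {stars : Finset (EStar n 3)} {S : EStar (n + 6) 3} :
    S ∈ stepStars stars ↔
      (∃ T ∈ stars, S = mapStar (eEmb n) T) ∨ (∃ T ∈ stars6, S = mapStar (gEmb n) T) ∨
      (∃ u b, S = crossStar n u b) := by
  simp [stepStars, Finset.mem_union, Finset.mem_image, eq_comm, or_assoc]

/-- Edges of an embedded star have both endpoints in the image-bound region. -/
lemma edges_mapStar_low {S : EStar n 3} {p : Sym2 (Fin (n + 6))}
    (h : p ∈ (mapStar (eEmb n) S).edges) : ∀ v ∈ p, v.val < n := by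
  rw [mem_edges_mapStar] at h
  obtain ⟨x, hx, rfl⟩ := h
  intro v hv
  rw [Sym2.mem_iff] at hv
  rcases hv with rfl | rfl
  · exact S.centre.isLt
  · exact x.isLt

lemma edges_mapStar_high {S : EStar 6 3} {p : Sym2 (Fin (n + 6))}
    (h : p ∈ (mapStar (gEmb n) S).edges) : ∀ v ∈ p, n ≤ v.val := by
  rw [mem_edges_mapStar] at h
  obtain ⟨x, hx, rfl⟩ := h
  intro v hv
  rw [Sym2.mem_iff] at hv
  rcases hv with rfl | rfl <;> simp

lemma edges_crossStar {u : Fin n} {b : Bool} {p : Sym2 (Fin (n + 6))}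
    (h : p ∈ (crossStar n u b).edges) :
    ∃ k : Fin 6, (k ∈ (if b then ({3, 4, 5} : Finset (Fin 6)) else {0, 1, 2})) ∧
      p = s(eEmb n u, gEmb n k) := by
  rw [mem_edges_iff] at h
  obtain ⟨a, ha, rfl⟩ := h
  rw [show (crossStar n u b).leaves = crossLeaves n b from rfl, mem_crossLeaves] at ha
  obtain ⟨k, hk, rfl⟩ := ha
  exact ⟨k, hk, rfl⟩

/-- Two embedded stars sharing an edge are equal (given the partition property). -/
lemma mapStar_shared {a b : ℕ} (f : Fin a ↪ Fin b) {stars : Finset (EStar a 3)}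
    (hpart : PartitionProp stars) {S T : EStar a 3} (hS : S ∈ stars) (hT : T ∈ stars)
    {p : Sym2 (Fin b)} (h1 : p ∈ (mapStar f S).edges) (h2 : p ∈ (mapStar f T).edges) :
    S = T := by
  rw [mem_edges_mapStar] at h1 h2
  obtain ⟨x, hx, rfl⟩ := h1
  obtain ⟨y, hy, hEq⟩ := h2
  rw [Sym2.eq_iff] at hEq
  have hq : s(S.centre, x) = s(T.centre, y) := by
    rw [Sym2.eq_iff]
    rcases hEq with ⟨h1, h2⟩ | ⟨h1, h2⟩
    · exact Or.inl ⟨f.injective h1, f.injective h2⟩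
    · exact Or.inr ⟨f.injective h1, f.injective h2⟩
  have hd : ¬ (s(S.centre, x) : Sym2 (Fin a)).IsDiag := by
    rw [Sym2.mk_isDiag_iff]
    rintro rfl
    exact S.centre_not_leaf hx
  obtain ⟨U, _, hUuniq⟩ := hpart _ hd
  have e1 : S = U := hUuniq S ⟨hS, mem_edges_iff.mpr ⟨x, hx, rfl⟩⟩
  have e2 : T = U := hUuniq T ⟨hT, mem_edges_iff.mpr ⟨y, hy, hq⟩⟩
  rw [e1, e2]

lemma cross_disj : ∀ k : Fin 6, k ∈ ({3, 4, 5} : Finset (Fin 6)) →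
    k ∈ ({0, 1, 2} : Finset (Fin 6)) → False := by decide

lemma crossStar_shared {u u' : Fin n} {b b' : Bool} {p : Sym2 (Fin (n + 6))}
    (h1 : p ∈ (crossStar n u b).edges) (h2 : p ∈ (crossStar n u' b').edges) :
    crossStar n u b = crossStar n u' b' := by
  obtain ⟨k, hk, rfl⟩ := edges_crossStar h1
  obtain ⟨k', hk', hEq⟩ := edges_crossStar h2
  rw [Sym2.eq_iff] at hEq
  rcases hEq with ⟨hc, hl⟩ | ⟨hc, hl⟩
  · have hu : u = u' := (eEmb n).injective hc
    have hkk : k = k' := (gEmb n).injective hl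
    subst hu; subst hkk
    cases b <;> cases b'
    · rfl
    · exact (cross_disj k (by simpa using hk') (by simpa using hk)).elim
    · exact (cross_disj k (by simpa using hk) (by simpa using hk')).elim
    · rfl
  · exfalso
    have hval : (eEmb n u).val = (gEmb n k').val := by rw [hc]
    simp only [eEmb_val, gEmb_val] at hval
    have := u.isLt
    omega

lemma step_unique {stars : Finset (EStar n 3)} (hpart : PartitionProp stars)
    {S T : EStar (n + 6) 3} (hS : S ∈ stepStars stars) (hT : T ∈ stepStars stars)
    {p : Sym2 (Fin (n + 6))} (h1 : p ∈ S.edges) (h2 : p ∈ T.edges) : S = T := by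
  rw [mem_stepStars] at hS hT
  rcases hS with ⟨S0, hS0, rfl⟩ | ⟨S0, hS0, rfl⟩ | ⟨u, b, rfl⟩ <;>
    rcases hT with ⟨T0, hT0, rfl⟩ | ⟨T0, hT0, rfl⟩ | ⟨u', b', rfl⟩
  · rw [mapStar_shared (eEmb n) hpart hS0 hT0 h1 h2]
  · exfalso
    obtain ⟨x, hx, rfl⟩ := mem_edges_mapStar (eEmb n) S0 |>.mp h1
    have hhigh := edges_mapStar_high h2 (eEmb n S0.centre) (by rw [Sym2.mem_iff]; left; rfl)
    have := S0.centre.isLt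
    simp only [eEmb_val] at hhigh
    omega
  · exfalso
    obtain ⟨k, hk, rfl⟩ := edges_crossStar h2
    have := edges_mapStar_low h1 (gEmb n k) (by rw [Sym2.mem_iff]; right; rfl)
    simp only [gEmb_val] at this
    omega
  · exfalso
    obtain ⟨x, hx, rfl⟩ := mem_edges_mapStar (gEmb n) S0 |>.mp h1
    have hlow := edges_mapStar_low h2 (gEmb n S0.centre) (by rw [Sym2.mem_iff]; left; rfl)
    simp only [gEmb_val] at hlow
    omega
  · rw [mapStar_shared (gEmb n) stars6_part hS0 hT0 h1 h2]
  · exfalso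
    obtain ⟨k, hk, rfl⟩ := edges_crossStar h2
    have := edges_mapStar_high h1 (eEmb n u') (by rw [Sym2.mem_iff]; left; rfl)
    have := u'.isLt
    simp only [eEmb_val] at *
    omega
  · exfalso
    obtain ⟨k, hk, rfl⟩ := edges_crossStar h1
    have := edges_mapStar_low h2 (gEmb n k) (by rw [Sym2.mem_iff]; right; rfl)
    simp only [gEmb_val] at this
    omega
  · exfalso
    obtain ⟨k, hk, rfl⟩ := edges_crossStar h1
    have := edges_mapStar_high h2 (eEmb n u) (by rw [Sym2.mem_iff]; left; rfl)
    have := u.isLt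
    simp only [eEmb_val] at *
    omega
  · exact crossStar_shared h1 h2

lemma cross_mem_of_ge : ∀ k : Fin 6, 3 ≤ k.val → k ∈ ({3, 4, 5} : Finset (Fin 6)) := by decide
lemma cross_mem_of_lt : ∀ k : Fin 6, k.val < 3 → k ∈ ({0, 1, 2} : Finset (Fin 6)) := by decide

lemma mixed_exists {stars : Finset (EStar n 3)} (u : Fin n) (k : Fin 6) :
    ∃ S ∈ stepStars stars, s(eEmb n u, gEmb n k) ∈ S.edges := by
  by_cases h3 : 3 ≤ k.val
  · refine ⟨crossStar n u true, mem_stepStars.mpr (Or.inr (Or.inr ⟨u, true, rfl⟩)), ?_⟩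
    rw [mem_edges_iff]
    exact ⟨gEmb n k, by rw [show (crossStar n u true).leaves = crossLeaves n true from rfl,
      mem_crossLeaves]; exact ⟨k, by simpa using cross_mem_of_ge k h3, rfl⟩, rfl⟩
  · refine ⟨crossStar n u false, mem_stepStars.mpr (Or.inr (Or.inr ⟨u, false, rfl⟩)), ?_⟩
    rw [mem_edges_iff]
    exact ⟨gEmb n k, by rw [show (crossStar n u false).leaves = crossLeaves n false from rfl,
      mem_crossLeaves]; exact ⟨k, by simpa using cross_mem_of_lt k (by omega), rfl⟩, rfl⟩

lemma mapStar_exists {a b : ℕ} (f : Fin a ↪ Fin b) {stars : Finset (EStar a 3)}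
    (hpart : PartitionProp stars) (x y : Fin a) (hxy : x ≠ y) :
    ∃ S ∈ stars, s(f x, f y) ∈ (mapStar f S).edges := by
  have hd : ¬ (s(x, y) : Sym2 (Fin a)).IsDiag := by rw [Sym2.mk_isDiag_iff]; exact hxy
  obtain ⟨U, ⟨hU, hUe⟩, _⟩ := hpart _ hd
  rw [mem_edges_iff] at hUe
  obtain ⟨a', ha', hq⟩ := hUe
  refine ⟨U, hU, ?_⟩
  rw [mem_edges_mapStar]
  refine ⟨a', ha', ?_⟩
  rw [Sym2.eq_iff] at hq
  rcases hq with ⟨rfl, rfl⟩ | ⟨rfl, rfl⟩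
  · rfl
  · exact Sym2.eq_swap

lemma step_exists {stars : Finset (EStar n 3)} (hpart : PartitionProp stars)
    (p : Sym2 (Fin (n + 6))) (hp : ¬ p.IsDiag) : ∃ S ∈ stepStars stars, p ∈ S.edges := by
  induction p using Sym2.ind with
  | _ x y =>
    rw [Sym2.mk_isDiag_iff] at hp
    by_cases hx : x.val < n <;> by_cases hy : y.val < n
    · obtain ⟨S, hS, hSe⟩ := mapStar_exists (eEmb n) hpart ⟨x.val, hx⟩ ⟨y.val, hy⟩
        (by intro h; exact hp (Fin.ext (by simpa using congrArg Fin.val h)))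
      refine ⟨mapStar (eEmb n) S, mem_stepStars.mpr (Or.inl ⟨S, hS, rfl⟩), ?_⟩
      have e1 : eEmb n ⟨x.val, hx⟩ = x := Fin.ext rfl
      have e2 : eEmb n ⟨y.val, hy⟩ = y := Fin.ext rfl
      rwa [e1, e2] at hSe
    · have hh := mixed_exists (stars := stars) ⟨x.val, hx⟩ ⟨y.val - n, by omega⟩
      have e1 : eEmb n ⟨x.val, hx⟩ = x := Fin.ext rfl
      have e2 : gEmb n ⟨y.val - n, by omega⟩ = y := Fin.ext (by simp; omega)
      rwa [e1, e2] at hh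
    · have hh := mixed_exists (stars := stars) ⟨y.val, hy⟩ ⟨x.val - n, by omega⟩
      have e1 : eEmb n ⟨y.val, hy⟩ = y := Fin.ext rfl
      have e2 : gEmb n ⟨x.val - n, by omega⟩ = x := Fin.ext (by simp; omega)
      rw [e1, e2, Sym2.eq_swap (a := y) (b := x)] at hh
      exact hh
    · obtain ⟨S, hS, hSe⟩ := mapStar_exists (gEmb n) stars6_part ⟨x.val - n, by omega⟩
        ⟨y.val - n, by omega⟩
        (by intro h
            have hv : x.val - n = y.val - n := congrArg Fin.val h
            exact hp (Fin.ext (by omega)))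
      refine ⟨mapStar (gEmb n) S, mem_stepStars.mpr (Or.inr (Or.inl ⟨S, hS, rfl⟩)), ?_⟩
      have e1 : gEmb n ⟨x.val - n, by omega⟩ = x := Fin.ext (by simp; omega)
      have e2 : gEmb n ⟨y.val - n, by omega⟩ = y := Fin.ext (by simp; omega)
      rwa [e1, e2] at hSe



/-! ### Colouring for the step -/

def stepCol (c : Fin n → Fin 2) : Fin (n + 6) → Fin 2 := fun v =>
  if h : v.val < n then c ⟨v.val, h⟩ else ⟨(v.val - n) % 2, by omega⟩

lemma stepCol_e (c : Fin n → Fin 2) (u : Fin n) : stepCol c (eEmb n u) = c u := by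
  simp only [stepCol]
  rw [dif_pos (show (eEmb n u).val < n from u.isLt)]
  rfl

lemma stepCol_g (c : Fin n → Fin 2) (k : Fin 6) :
    stepCol c (gEmb n k) = ⟨k.val % 2, by omega⟩ := by
  simp only [stepCol]
  rw [dif_neg (show ¬ (gEmb n k).val < n by simp)]
  exact Fin.ext (by simp)

lemma stars6_parity : ∀ S ∈ stars6, ∃ a ∈ S.leaves, a.val % 2 ≠ S.centre.val % 2 := by decide

lemma step_weak {stars : Finset (EStar n 3)} (c : Fin n → Fin 2)
    (hweak : ∀ S ∈ stars, ∃ a ∈ S.leaves, c a ≠ c S.centre) :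
    ∀ S ∈ stepStars stars, ∃ a ∈ S.leaves, stepCol c a ≠ stepCol c S.centre := by
  intro S hS
  rcases mem_stepStars.mp hS with ⟨T, hT, rfl⟩ | ⟨T, hT, rfl⟩ | ⟨u, b, rfl⟩
  · obtain ⟨a, ha, hne⟩ := hweak T hT
    refine ⟨eEmb n a, Finset.mem_map_of_mem _ ha, ?_⟩
    rw [show (mapStar (eEmb n) T).centre = eEmb n T.centre from rfl, stepCol_e, stepCol_e]
    exact hne
  · obtain ⟨a, ha, hne⟩ := stars6_parity T hT
    refine ⟨gEmb n a, Finset.mem_map_of_mem _ ha, ?_⟩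
    rw [show (mapStar (gEmb n) T).centre = gEmb n T.centre from rfl, stepCol_g, stepCol_g]
    intro h
    exact hne (by simpa using congrArg Fin.val h)
  · have hc : stepCol c (crossStar n u b).centre = c u := stepCol_e c u
    by_cases h0 : c u = 0
    · cases b
      · refine ⟨gEmb n 1, ?_, ?_⟩
        · rw [show (crossStar n u false).leaves = crossLeaves n false from rfl, mem_crossLeaves]
          exact ⟨1, by decide, rfl⟩
        · rw [stepCol_g, hc, h0]; decide
      · refine ⟨gEmb n 3, ?_, ?_⟩
        · rw [show (crossStar n u true).leaves = crossLeaves n true from rfl, mem_crossLeaves]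
          exact ⟨3, by decide, rfl⟩
        · rw [stepCol_g, hc, h0]; decide
    · have h1 : c u = 1 := by
        have h2 := (c u).isLt
        have hne : (c u).val ≠ 0 := fun hh => h0 (Fin.ext hh)
        exact Fin.ext (by omega)
      cases b
      · refine ⟨gEmb n 0, ?_, ?_⟩
        · rw [show (crossStar n u false).leaves = crossLeaves n false from rfl, mem_crossLeaves]
          exact ⟨0, by decide, rfl⟩
        · rw [stepCol_g, hc, h1]; decide
      · refine ⟨gEmb n 4, ?_, ?_⟩
        · rw [show (crossStar n u true).leaves = crossLeaves n true from rfl, mem_crossLeaves]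
          exact ⟨4, by decide, rfl⟩
        · rw [stepCol_g, hc, h1]; decide

lemma fin6_parity_card : ∀ i : Fin 2,
    (Finset.univ.filter (fun k : Fin 6 => (⟨k.val % 2, by omega⟩ : Fin 2) = i)).card = 3 := by
  decide

lemma step_classCard (c : Fin n → Fin 2) (i : Fin 2) :
    classCard (stepCol c) i = classCard c i + 3 := by
  classical
  have hsplit : (Finset.univ.filter (fun v => stepCol c v = i)) =
      ((Finset.univ.filter (fun v : Fin n => c v = i)).map (eEmb n)) ∪
      ((Finset.univ.filter (fun k : Fin 6 => (⟨k.val % 2, by omega⟩ : Fin 2) = i)).map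
        (gEmb n)) := by
    ext v
    simp only [Finset.mem_filter, Finset.mem_univ, true_and, Finset.mem_union, Finset.mem_map]
    constructor
    · intro hv
      by_cases h : v.val < n
      · left
        refine ⟨⟨v.val, h⟩, ?_, Fin.ext rfl⟩
        rw [← hv]
        simp [stepCol, h]
      · right
        refine ⟨⟨v.val - n, by omega⟩, ?_, Fin.ext (by simp; omega)⟩
        rw [← hv]
        simp [stepCol, h]
    · rintro (⟨u, hu, rfl⟩ | ⟨k, hk, rfl⟩)
      · rwa [stepCol_e]
      · rwa [stepCol_g]
  rw [classCard, hsplit, Finset.card_union_of_disjoint, Finset.card_map, Finset.card_map,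
    fin6_parity_card]
  · rfl
  · rw [Finset.disjoint_left]
    intro a ha hb
    simp only [Finset.mem_map] at ha hb
    obtain ⟨u, _, rfl⟩ := ha
    obtain ⟨k, _, hk⟩ := hb
    have := congrArg Fin.val hk
    simp only [gEmb_val, eEmb_val] at this
    have := u.isLt
    omega

lemma step_good (h : Good n) : Good (n + 6) := by
  obtain ⟨stars, hpart, c, hweak, h0, h1⟩ := h
  refine ⟨stepStars stars, ?_, stepCol c, step_weak c hweak, ?_, ?_⟩
  · intro p hp
    obtain ⟨S, hS, hSe⟩ := step_exists hpart p hp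
    exact ⟨S, ⟨hS, hSe⟩, fun T hT => step_unique hpart hT.1 hS hT.2 hSe⟩
  · rw [step_classCard, h0]; omega
  · rw [step_classCard, h1]; omega

end Step

/-! ### All admissible orders are good -/

lemma good_all : ∀ n : ℕ, (n % 3 = 0 ∨ n % 3 = 1) → 6 ≤ n → Good n := by
  intro n
  induction n using Nat.strong_induction_on with
  | _ n ih =>
    intro hadm hn
    by_cases h12 : n < 12
    · interval_cases n
      · exact good6
      · exact good7
      · rcases hadm with h | h <;> omega
      · exact good9
      · exact good10
      · rcases hadm with h | h <;> omega
    · have h1 : Good (n - 6) :=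
        ih (n - 6) (by omega) (hadm.imp (fun h => by omega) (fun h => by omega)) (by omega)
      have h2 := step_good h1
      rwa [Nat.sub_add_cancel (by omega)] at h2

/-- For every admissible order `n` there is an equitably 2-chromatic 3-star system
of order `n`. -/
theorem stmt5 (n : ℕ) (hadm : n % 3 = 0 ∨ n % 3 = 1) (hn : 6 ≤ n) :
    ∃ sys : EStarSystem n 3, Chromatic sys 2 ∧
      ∃ c : Fin n → Fin 2, IsWeakColouring sys c ∧
        ∀ i j : Fin 2, classCard c i ≤ classCard c j + 1 := by
  obtain ⟨stars, hpart, c, hweak, h0, h1⟩ := good_all n hadm hn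
  refine ⟨⟨stars, hpart⟩, ⟨⟨c, hweak⟩, ?_⟩, c, hweak, ?_⟩
  · rintro ⟨c1, hc1⟩
    have h01 : ¬ (s((⟨0, by omega⟩ : Fin n), (⟨1, by omega⟩ : Fin n)) : Sym2 (Fin n)).IsDiag := by
      rw [Sym2.mk_isDiag_iff]
      intro h
      have := congrArg Fin.val h
      simp at this
    obtain ⟨S, ⟨hS, _⟩, _⟩ := hpart _ h01
    obtain ⟨a, _, hne⟩ := hc1 S hS
    have hsub : ∀ v w : Fin (2 - 1), v = w := by decide
    exact hne (hsub _ _)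
  · have hcase : ∀ m : Fin 2, m = 0 ∨ m = 1 := by decide
    intro i j
    rcases hcase i with rfl | rfl <;> rcases hcase j with rfl | rfl <;> simp only [h0, h1] <;> omega
end

section
/- Let k >= 3. If there exists a (k-1)-chromatic 3-star system (of some order), then there exists a k-chromatic 3-star system (of some order). -/
namespace Stmt7Aux

open Finset

attribute [local instance] Classical.propDecidable

lemma estar_ext {n e : ℕ} {a b : EStar n e} (h1 : a.centre = b.centre)
    (h2 : a.leaves = b.leaves) : a = b := by
  cases a; cases b; simp_all

lemma mem_edges {n e : ℕ} {S : EStar n e} {p : Sym2 (Fin n)} :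
    p ∈ S.edges ↔ ∃ a ∈ S.leaves, s(S.centre, a) = p := by
  simp [EStar.edges]

lemma runcount (a L k c : ℕ) :
    ((Finset.range L).filter (fun s => (a + s) % k = c)).card ≤ L / k + 1 := by
  rcases Nat.eq_zero_or_pos k with hk | hk
  · subst hk
    have : ((Finset.range L).filter (fun s => (a + s) % 0 = c)).card ≤ 1 := by
      apply Finset.card_le_one.mpr
      intro s hs s' hs'
      simp only [mem_filter, mem_range, Nat.mod_zero] at hs hs'
      omega
    omega
  have hle : ((Finset.range L).filter (fun s => (a + s) % k = c)).card ≤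
      (Finset.range (L / k + 1)).card := by
    apply Finset.card_le_card_of_injOn (fun s => s / k)
    · intro s hs
      simp only [mem_coe, mem_filter, mem_range] at hs
      simp only [mem_coe, mem_range]
      have h1 : s / k ≤ (L-1) / k := Nat.div_le_div_right (by omega)
      have h2 : (L-1)/k ≤ L / k := Nat.div_le_div_right (by omega)
      omega
    · intro s hs s' hs' hss
      simp only [mem_coe, mem_filter, mem_range] at hs hs'
      simp only at hss
      have h1 : s % k = s' % k := by
        have : (a + s) % k = (a + s') % k := by rw [hs.2, hs'.2]
        exact Nat.ModEq.add_left_cancel' a this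
      calc s = k * (s / k) + s % k := (Nat.div_add_mod s k).symm
        _ = k * (s' / k) + s' % k := by rw [hss, h1]
        _ = s' := Nat.div_add_mod s' k
  simpa using hle

lemma good_partition {α : Type*} [DecidableEq α] :
    ∀ (m : ℕ) (X G : Finset α), G ⊆ X → X.card = 3 * m → X.card ≤ 3 * G.card →
    ∃ P : Finset (Finset α),
      (∀ T ∈ P, T.card = 3 ∧ (T ∩ G).Nonempty) ∧
      (∀ T₁ ∈ P, ∀ T₂ ∈ P, T₁ ≠ T₂ → Disjoint T₁ T₂) ∧
      P.biUnion id = X := by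
  intro m
  induction m with
  | zero =>
    intro X G hsub hcard _
    refine ⟨∅, by simp, by simp, ?_⟩
    simp [Finset.card_eq_zero.mp (by omega : X.card = 0)]
  | succ m ih =>
    intro X G hsub hcard hle
    obtain ⟨g, hg⟩ := Finset.card_pos.mp (show 0 < G.card by omega)
    have hgX : g ∈ X := hsub hg
    -- choose two further elements t₁ t₂ of X, preferring elements outside G
    have hmain : ∃ t₁ t₂, t₁ ∈ X ∧ t₂ ∈ X ∧ t₁ ≠ g ∧ t₂ ≠ g ∧ t₁ ≠ t₂ ∧
        (G \ ({g, t₁, t₂} : Finset α)).card ≥ m := by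
      by_cases hB : 2 ≤ (X \ G).card
      · obtain ⟨b₁, hb₁, b₂, hb₂, hbb⟩ := Finset.one_lt_card.mp (show 1 < (X \ G).card by omega)
        have h1 : b₁ ∈ X ∧ b₁ ∉ G := by simpa using (Finset.mem_sdiff.mp hb₁)
        have h2 : b₂ ∈ X ∧ b₂ ∉ G := by simpa using (Finset.mem_sdiff.mp hb₂)
        refine ⟨b₁, b₂, h1.1, h2.1, ?_, ?_, hbb, ?_⟩
        · rintro rfl; exact h1.2 hg
        · rintro rfl; exact h2.2 hg
        · have : G \ ({g, b₁, b₂} : Finset α) = G.erase g := by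
            ext x
            simp only [Finset.mem_sdiff, Finset.mem_insert, Finset.mem_singleton,
              Finset.mem_erase]
            constructor
            · rintro ⟨hx, hx2⟩
              exact ⟨fun h => hx2 (Or.inl h), hx⟩
            · rintro ⟨hx1, hx2⟩
              refine ⟨hx2, ?_⟩
              rintro (rfl | rfl | rfl)
              exacts [hx1 rfl, h1.2 hx2, h2.2 hx2]
          rw [this, Finset.card_erase_of_mem hg]
          omega
      · -- almost all of X is good
        have hXcard : 2 ≤ (X.erase g).card := by
          rw [Finset.card_erase_of_mem hgX]; omega
        obtain ⟨t₁, ht₁, t₂, ht₂, htt⟩ := Finset.one_lt_card.mp (show 1 < (X.erase g).card by omega)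
        have h1 := Finset.mem_erase.mp ht₁
        have h2 := Finset.mem_erase.mp ht₂
        refine ⟨t₁, t₂, h1.2, h2.2, h1.1, h2.1, htt, ?_⟩
        have hGlarge : X.card ≤ G.card + 1 := by
          have := Finset.card_sdiff_add_card_eq_card (hsub)
          omega
        have hsplit : G.card ≤ (G \ ({g, t₁, t₂} : Finset α)).card + 3 := by
          have hsub2 : G ⊆ (G \ ({g, t₁, t₂} : Finset α)) ∪ ({g, t₁, t₂} : Finset α) := by
            intro x hx
            by_cases hxT : x ∈ ({g, t₁, t₂} : Finset α)
            · exact Finset.mem_union_right _ hxT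
            · exact Finset.mem_union_left _ (Finset.mem_sdiff.mpr ⟨hx, hxT⟩)
          calc G.card ≤ _ := Finset.card_le_card hsub2
            _ ≤ (G \ ({g, t₁, t₂} : Finset α)).card + ({g, t₁, t₂} : Finset α).card :=
              Finset.card_union_le _ _
            _ ≤ _ := by
              have : ({g, t₁, t₂} : Finset α).card ≤ 3 := by
                apply le_trans (Finset.card_insert_le _ _)
                have := Finset.card_insert_le t₁ ({t₂} : Finset α)
                simp at this ⊢
                omega
              omega
        omega
    obtain ⟨t₁, t₂, ht₁X, ht₂X, ht₁g, ht₂g, htt, hGrest⟩ := hmain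
    set T : Finset α := {g, t₁, t₂} with hT
    have hTsub : T ⊆ X := by
      intro x hx
      simp only [hT, Finset.mem_insert, Finset.mem_singleton] at hx
      rcases hx with rfl | rfl | rfl <;> assumption
    have hTcard : T.card = 3 := by
      rw [hT]
      exact Finset.card_eq_three.mpr ⟨g, t₁, t₂, Ne.symm ht₁g, Ne.symm ht₂g, htt, rfl⟩
    have hX'card : (X \ T).card = 3 * m := by
      rw [Finset.card_sdiff_of_subset hTsub, hTcard]; omega
    obtain ⟨P', hP'1, hP'2, hP'3⟩ := ih (X \ T) (G \ T)
      (Finset.sdiff_subset_sdiff hsub (le_refl _))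
      hX'card
      (by omega)
    refine ⟨insert T P', ?_, ?_, ?_⟩
    · intro T' hT'
      rcases Finset.mem_insert.mp hT' with rfl | hT'
      · exact ⟨hTcard, ⟨g, by simp [hT, hg]⟩⟩
      · obtain ⟨hc3, x, hx⟩ := hP'1 T' hT'
        simp only [Finset.mem_inter, Finset.mem_sdiff] at hx
        exact ⟨hc3, ⟨x, Finset.mem_inter.mpr ⟨hx.1, hx.2.1⟩⟩⟩
    · intro T₁ h₁ T₂ h₂ hne
      have hdisj : ∀ T' ∈ P', Disjoint T T' := by
        intro T' hT'
        have hT'sub : T' ⊆ X \ T := by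
          rw [← hP'3]
          intro x hx
          exact Finset.mem_biUnion.mpr ⟨T', hT', hx⟩
        exact Finset.disjoint_left.mpr
          (fun a ha hha => (Finset.mem_sdiff.mp (hT'sub hha)).2 ha)
      rcases Finset.mem_insert.mp h₁ with rfl | h₁ <;>
        rcases Finset.mem_insert.mp h₂ with rfl | h₂
      · exact absurd rfl hne
      · exact hdisj _ h₂
      · exact (hdisj _ h₁).symm
      · exact hP'2 _ h₁ _ h₂ hne
    · rw [Finset.biUnion_insert, hP'3]
      simp only [id]
      rw [Finset.union_sdiff_of_subset hTsub]

end Stmt7Aux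

namespace Stmt7Main

open Finset

attribute [local instance] Classical.propDecidable

noncomputable instance {n e : ℕ} : Fintype (EStar n e) :=
  Fintype.ofInjective (fun S => (S.centre, S.leaves))
    (fun a b h => Stmt7Aux.estar_ext (congrArg Prod.fst h) (congrArg Prod.snd h))

variable (k n : ℕ)

/-- block length in copies -/
def r : ℕ := 3 * k * k

/-- the number of labels -/
def M : ℕ := Fintype.card (Fin (r k * n) → Fin (k-1))

/-- half window -/
def W : ℕ := 3 * (M k n + r k)

/-- the number of copies -/
def t : ℕ := 2 * W k n + 1

/-- the order of the new system -/
def N : ℕ := t k n * n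

section Basic

variable (hk : 3 ≤ k) (hn : 0 < n)

lemma M_eq : M k n = (k-1) ^ (r k * n) := by
  simp [M, Fintype.card_fun]

include hk hn in
lemma M_ge : 2 ≤ M k n := by
  rw [M_eq]
  have h1 : 2 ≤ k - 1 := by omega
  have h2 : 0 < r k * n := by
    have : 0 < r k := by simp [r]; omega
    positivity
  calc (2:ℕ) = 2^1 := by norm_num
    _ ≤ (k-1)^1 := by simpa using h1
    _ ≤ (k-1)^(r k * n) := Nat.pow_le_pow_right (by omega) (by omega)

include hk in
lemma r_ge : 27 ≤ r k := by
  simp only [r]; nlinarith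

include hk hn in
lemma W_ge : 81 ≤ W k n := by
  have := r_ge k hk
  simp only [W]; omega

include hk hn in
lemma t_pos : 0 < t k n := by simp [t]

include hk hn in
lemma N_pos : 0 < N k n := by
  have := t_pos k n hk hn
  simp only [N]; positivity

include hk hn in
lemma r_le_t : r k ≤ t k n := by
  have := M_ge k n hk hn
  simp only [t, W]; omega

end Basic

/-- distance from copy i to copy m, cyclically forward -/
def dst (i m : ℕ) : ℕ := (m + t k n - i) % t k n

lemma dst_eval {i m : ℕ} (hi : i < t k n) (hm : m < t k n) :
    dst k n i m = if i ≤ m then m - i else m + t k n - i := by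
  unfold dst
  rcases le_or_gt i m with h | h
  · rw [if_pos h]
    have h2 : m + t k n - i = (m - i) + t k n := by omega
    rw [h2, Nat.add_mod_right, Nat.mod_eq_of_lt (by omega)]
  · rw [if_neg (by omega)]
    exact Nat.mod_eq_of_lt (by omega)

lemma dst_self {i : ℕ} (hi : i < t k n) : dst k n i i = 0 := by
  rw [dst_eval k n hi hi]; simp

lemma dst_lt {i m : ℕ} (hi : i < t k n) (hm : m < t k n) : dst k n i m < t k n := by
  rw [dst_eval k n hi hm]; split <;> omega

lemma dst_eq_zero_iff {i m : ℕ} (hi : i < t k n) (hm : m < t k n) :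
    dst k n i m = 0 ↔ m = i := by
  rw [dst_eval k n hi hm]; split <;> omega

lemma dst_rev {i m : ℕ} (hi : i < t k n) (hm : m < t k n) (hne : i ≠ m) :
    dst k n i m + dst k n m i = t k n := by
  rw [dst_eval k n hi hm, dst_eval k n hm hi]
  rcases lt_or_gt_of_ne hne with h | h
  · rw [if_pos (by omega), if_neg (by omega)]; omega
  · rw [if_neg (by omega), if_pos (by omega)]; omega

lemma dst_shift {i m ℓ : ℕ} (hi : i < t k n) (hm : m < t k n) (hml : m + ℓ < t k n)
    (hd : dst k n i m + ℓ < t k n) : dst k n i (m + ℓ) = dst k n i m + ℓ := by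
  rcases le_or_gt i m with h | h
  · rw [dst_eval k n hi hm, if_pos h] at hd
    rw [dst_eval k n hi hml, if_pos (by omega), dst_eval k n hi hm, if_pos h]
    omega
  · rw [dst_eval k n hi hm, if_neg (by omega)] at hd
    rw [dst_eval k n hi hml, dst_eval k n hi hm, if_neg (by omega)]
    split <;> omega

lemma dst_add {i s : ℕ} (hi : i < t k n) (hs : s < t k n) :
    dst k n i ((i + s) % t k n) = s := by
  have h0 : 0 < t k n := by omega
  rcases Nat.lt_or_ge (i + s) (t k n) with h | h
  · rw [Nat.mod_eq_of_lt h, dst_eval k n hi (by omega)]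
    rw [if_pos (by omega)]; omega
  · have h2 : (i + s) % t k n = i + s - t k n := by
      rw [Nat.mod_eq_sub_mod h, Nat.mod_eq_of_lt (by omega)]
    rw [h2, dst_eval k n hi (by omega)]
    split <;> omega

end Stmt7Main
namespace Stmt7Main

open Finset

attribute [local instance] Classical.propDecidable

noncomputable section

variable (k n : ℕ)

lemma t_pos' : 0 < t k n := by simp [t]

lemma n_pos_of_w (w : Fin (r k * n)) : 0 < n := by
  rcases Nat.eq_zero_or_pos n with h|h
  · exfalso; have := w.isLt; simp [h] at this
  · exact h

lemma n_pos_of_x (x : Fin (N k n)) : 0 < n := by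
  rcases Nat.eq_zero_or_pos n with h|h
  · exfalso; have := x.isLt; simp [N, h] at this
  · exact h

lemma k_pos_of_c (x : Fin (k-1)) : 0 < k := by
  have := x.isLt; omega

/-- the copy index of a vertex -/
def cpy (x : Fin (N k n)) : ℕ := x.val / n

/-- position within its copy -/
def pos (x : Fin (N k n)) : Fin n := ⟨x.val % n, Nat.mod_lt _ (n_pos_of_x k n x)⟩

lemma cpy_lt (x : Fin (N k n)) : cpy k n x < t k n := by
  have hx := x.isLt
  simp only [N] at hx
  exact Nat.div_lt_of_lt_mul (by rw [Nat.mul_comm]; exact hx)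

lemma val_eq (x : Fin (N k n)) : x.val = cpy k n x * n + (pos k n x).val := by
  simp only [cpy, pos]
  rw [Nat.mul_comm (x.val / n) n]
  exact (Nat.div_add_mod _ _).symm

/-- embedding of position p into copy m -/
def emb (m : ℕ) (p : Fin n) : Fin (N k n) :=
  ⟨m % t k n * n + p.val, by
    simp only [N]
    have h1 : m % t k n < t k n := Nat.mod_lt _ (t_pos' k n)
    have h2 := p.isLt
    have h3 : (m % t k n + 1) * n = m % t k n * n + n := by ring
    have h4 : (m % t k n + 1) * n ≤ t k n * n := Nat.mul_le_mul_right _ (by omega)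
    omega⟩

lemma emb_val {m : ℕ} (hm : m < t k n) (p : Fin n) :
    (emb k n m p).val = m * n + p.val := by
  simp [emb, Nat.mod_eq_of_lt hm]

lemma cpy_emb {m : ℕ} (hm : m < t k n) (p : Fin n) : cpy k n (emb k n m p) = m := by
  simp only [cpy, emb_val k n hm]
  rw [Nat.mul_comm m n, Nat.mul_add_div (p.pos), Nat.div_eq_of_lt p.isLt]
  omega

lemma pos_emb {m : ℕ} (hm : m < t k n) (p : Fin n) : pos k n (emb k n m p) = p := by
  apply Fin.ext
  simp only [pos, emb_val k n hm]
  rw [Nat.mul_comm, Nat.mul_add_mod]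
  exact Nat.mod_eq_of_lt p.isLt

lemma emb_cpy_pos (x : Fin (N k n)) : emb k n (cpy k n x) (pos k n x) = x := by
  apply Fin.ext
  rw [emb_val k n (cpy_lt k n x)]
  exact (val_eq k n x).symm

/-- embedding of block-vertex w into the block starting at copy s -/
def bv (s : ℕ) (w : Fin (r k * n)) : Fin (N k n) :=
  ⟨(s * n + w.val) % N k n, Nat.mod_lt _ (by
    have hn := n_pos_of_w k n w
    have ht := t_pos' k n
    simp only [N]; positivity)⟩

lemma bv_val {s : ℕ} (hs : s + r k ≤ t k n) (w : Fin (r k * n)) :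
    (bv k n s w).val = s * n + w.val := by
  have hw := w.isLt
  have h1 : s * n + w.val < N k n := by
    simp only [N]
    calc s * n + w.val < s * n + r k * n := by omega
      _ = (s + r k) * n := by ring
      _ ≤ t k n * n := Nat.mul_le_mul_right _ hs
  simp [bv, Nat.mod_eq_of_lt h1]

lemma cpy_bv {s : ℕ} (hs : s + r k ≤ t k n) (w : Fin (r k * n)) :
    cpy k n (bv k n s w) = s + w.val / n := by
  have hn := n_pos_of_w k n w
  simp only [cpy, bv_val k n hs]
  rw [Nat.mul_comm, Nat.mul_add_div hn]

lemma pos_bv {s : ℕ} (hs : s + r k ≤ t k n) (w : Fin (r k * n)) :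
    (pos k n (bv k n s w)).val = w.val % n := by
  simp only [pos, bv_val k n hs]
  rw [Nat.mul_comm, Nat.mul_add_mod]

lemma bv_div {w : Fin (r k * n)} : w.val / n < r k := by
  have hw := w.isLt
  exact Nat.div_lt_of_lt_mul (by rw [Nat.mul_comm n (r k)]; exact hw)

lemma bv_inj {s : ℕ} (hs : s + r k ≤ t k n) : Function.Injective (bv k n s) := by
  intro w w' h
  have h1 := congrArg Fin.val h
  rw [bv_val k n hs, bv_val k n hs] at h1
  exact Fin.ext (by omega)

variable (c₀ : Fin n → Fin (k-1))

/-- our weak k-colouring of the new system -/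
def chi (x : Fin (N k n)) : Fin k :=
  ⟨((c₀ (pos k n x)).val + cpy k n x) % k,
   Nat.mod_lt _ (k_pos_of_c k (c₀ (pos k n x)))⟩

/-- the block-local reference colouring -/
def chi0 (w : Fin (r k * n)) : Fin k :=
  ⟨((c₀ ⟨w.val % n, Nat.mod_lt _ (n_pos_of_w k n w)⟩).val + w.val / n) % k,
   Nat.mod_lt _ (k_pos_of_c k (c₀ ⟨w.val % n, Nat.mod_lt _ (n_pos_of_w k n w)⟩))⟩

lemma chi_bv {s : ℕ} (hs : s + r k ≤ t k n) (w : Fin (r k * n)) :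
    (chi k n c₀ (bv k n s w)).val = ((chi0 k n c₀ w).val + s) % k := by
  have hp : pos k n (bv k n s w) = ⟨w.val % n, Nat.mod_lt _ (n_pos_of_w k n w)⟩ := by
    apply Fin.ext
    exact pos_bv k n hs w
  simp only [chi, chi0, hp, cpy_bv k n hs]
  conv_rhs => rw [Nat.mod_add_mod]
  congr 1
  omega

lemma chi_bv_ne {s : ℕ} (hs : s + r k ≤ t k n) {w w' : Fin (r k * n)}
    (h : chi0 k n c₀ w ≠ chi0 k n c₀ w') :
    chi k n c₀ (bv k n s w) ≠ chi k n c₀ (bv k n s w') := by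
  intro hc
  apply h
  have h1 := congrArg Fin.val hc
  rw [chi_bv k n c₀ hs, chi_bv k n c₀ hs] at h1
  have h2 : (chi0 k n c₀ w).val % k = (chi0 k n c₀ w').val % k :=
    Nat.ModEq.add_right_cancel' s h1
  apply Fin.ext
  rwa [Nat.mod_eq_of_lt (chi0 k n c₀ w).isLt, Nat.mod_eq_of_lt (chi0 k n c₀ w').isLt] at h2

end

end Stmt7Main
namespace Stmt7Main

open Finset

attribute [local instance] Classical.propDecidable

noncomputable section

variable (k n : ℕ)

/-- the type of labels: colourings of a block -/
abbrev Col := Fin (r k * n) → Fin (k-1)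

lemma dst_inv {i m : ℕ} (hi : i < t k n) (hm : m < t k n) :
    (i + dst k n i m) % t k n = m := by
  rw [dst_eval k n hi hm]
  split
  · rw [show i + (m - i) = m by omega]
    exact Nat.mod_eq_of_lt hm
  · rw [show i + (m + t k n - i) = m + t k n by omega, Nat.add_mod_right]
    exact Nat.mod_eq_of_lt hm

lemma M_pos (hk : 3 ≤ k) (hn : 0 < n) : 0 < M k n := by
  have := M_ge k n hk hn; omega

/-- enumeration of labels -/
def Lc (hk : 3 ≤ k) (hn : 0 < n) (m : ℕ) : Col k n :=
  (Fintype.equivFin (Col k n)).symm ⟨m % M k n, Nat.mod_lt _ (M_pos k n hk hn)⟩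

def idx (c : Col k n) : ℕ := ((Fintype.equivFin (Col k n)) c).val

lemma idx_lt (c : Col k n) : idx k n c < M k n := ((Fintype.equivFin (Col k n)) c).isLt

lemma Lc_idx (hk : 3 ≤ k) (hn : 0 < n) (c : Col k n) : Lc k n hk hn (idx k n c) = c := by
  have h1 : (⟨idx k n c % M k n, Nat.mod_lt _ (M_pos k n hk hn)⟩ :
      Fin (M k n)) = (Fintype.equivFin (Col k n)) c := by
    apply Fin.ext
    exact Nat.mod_eq_of_lt (idx_lt k n c)
  rw [Lc, Equiv.symm_apply_eq]
  exact h1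

variable (c₀ : Fin n → Fin (k-1))

lemma chi0_fiber_card (hk : 3 ≤ k) (hn : 0 < n) (γ : Fin k) :
    ((univ : Finset (Fin (r k * n))).filter (fun w => chi0 k n c₀ w = γ)).card ≤ (3*k+1)*n := by
  have hkpos : 0 < k := by omega
  set F := (univ : Finset (Fin (r k * n))).filter (fun w => chi0 k n c₀ w = γ) with hF
  have hfib := Finset.card_eq_sum_card_fiberwise
    (f := fun w : Fin (r k * n) => (⟨w.val % n, Nat.mod_lt _ hn⟩ : Fin n))
    (s := F) (t := univ) (fun x _ => mem_univ _)
  rw [hfib]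
  have hbound : ∀ p : Fin n,
      (F.filter (fun w => (⟨w.val % n, Nat.mod_lt _ hn⟩ : Fin n) = p)).card ≤ 3*k+1 := by
    intro p
    have hinj : ((F.filter (fun w => (⟨w.val % n, Nat.mod_lt _ hn⟩ : Fin n) = p)).card ≤
        ((Finset.range (r k)).filter (fun ℓ => ((c₀ p).val + ℓ) % k = γ.val)).card) := by
      apply Finset.card_le_card_of_injOn (fun w => w.val / n)
      · intro w hw
        simp only [hF, mem_coe, mem_filter, mem_univ, true_and] at hw
        obtain ⟨hw1, hw2⟩ := hw
        simp only [mem_coe, mem_filter, mem_range]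
        refine ⟨bv_div k n, ?_⟩
        rw [← hw2]
        have hval := congrArg Fin.val hw1
        simpa [chi0] using hval
      · intro w hw w' hw' hww
        simp only [hF, mem_coe, mem_filter] at hw hw'
        have h1 : w.val % n = w'.val % n := by
          have e1 := congrArg Fin.val hw.2
          have e2 := congrArg Fin.val hw'.2
          simp only at e1 e2
          omega
        simp only at hww
        apply Fin.ext
        calc w.val = n * (w.val / n) + w.val % n := (Nat.div_add_mod _ _).symm
          _ = n * (w'.val / n) + w'.val % n := by rw [hww, h1]
          _ = w'.val := Nat.div_add_mod _ _
    have hrun := Stmt7Aux.runcount ((c₀ p).val) (r k) k (γ.val)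
    have hdiv : r k / k = 3 * k := by
      simp only [r]
      rw [Nat.mul_div_cancel _ hkpos]
    omega
  calc ∑ p ∈ (univ : Finset (Fin n)), _ ≤ ∑ p ∈ (univ : Finset (Fin n)), (3*k+1) :=
        Finset.sum_le_sum (fun p _ => hbound p)
    _ = n * (3*k+1) := by simp [Finset.sum_const, Finset.card_univ, mul_comm]
    _ = (3*k+1)*n := by ring

lemma straddle (hk : 3 ≤ k) (hn : 0 < n) (c : Col k n) :
    ∃ x y z : Fin (r k * n), x ≠ y ∧ x ≠ z ∧ y ≠ z ∧ c y = c x ∧ c z = c x ∧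
      chi0 k n c₀ x ≠ chi0 k n c₀ y := by
  by_contra hcon
  push_neg at hcon
  -- every colour class is small or chi0-constant
  have hclass : ∀ β : Fin (k-1),
      ((univ : Finset (Fin (r k * n))).filter (fun w => c w = β)).card ≤ (3*k+1)*n := by
    intro β
    set Cl := (univ : Finset (Fin (r k * n))).filter (fun w => c w = β) with hCl
    by_cases h3 : Cl.card ≤ 2
    · nlinarith
    · push_neg at h3
      have hconst : ∀ x ∈ Cl, ∀ y ∈ Cl, chi0 k n c₀ x = chi0 k n c₀ y := by
        intro x hx y hy
        by_contra hne
        have hxy : x ≠ y := by rintro rfl; exact hne rfl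
        have hz : (Cl \ {x, y}).Nonempty := by
          rw [← Finset.card_pos]
          have h1 : ({x, y} : Finset (Fin (r k * n))).card ≤ 2 := by
            apply le_trans (Finset.card_insert_le _ _); simp
          have h2 := Finset.card_sdiff_add_card_eq_card
            (Finset.inter_subset_left (s₁ := Cl) (s₂ := {x,y}))
          have h3 : (Cl \ ({x,y} : Finset (Fin (r k * n)))).card
              ≥ Cl.card - ({x,y} : Finset (Fin (r k * n))).card := by
            have hsub : Cl ⊆ (Cl \ ({x,y} : Finset (Fin (r k * n)))) ∪ ({x,y} : Finset (Fin (r k * n))) := by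
              intro a ha
              by_cases haT : a ∈ ({x,y} : Finset (Fin (r k * n)))
              · exact Finset.mem_union_right _ haT
              · exact Finset.mem_union_left _ (Finset.mem_sdiff.mpr ⟨ha, haT⟩)
            have := Finset.card_le_card hsub
            have := Finset.card_union_le (Cl \ ({x,y} : Finset (Fin (r k * n)))) ({x,y} : Finset (Fin (r k * n)))
            omega
          omega
        obtain ⟨z, hzmem⟩ := hz
        rw [Finset.mem_sdiff] at hzmem
        obtain ⟨hzCl, hznot⟩ := hzmem
        simp only [Finset.mem_insert, Finset.mem_singleton, not_or] at hznot
        simp only [hCl, mem_filter, mem_univ, true_and] at hx hy hzCl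
        exact hne (hcon x y z hxy (Ne.symm hznot.1) (Ne.symm hznot.2)
          (by rw [hy, hx]) (by rw [hzCl, hx]))
      rcases Finset.card_pos.mp (show 0 < Cl.card by omega) with ⟨x₀, hx₀⟩
      have hsub : Cl ⊆ (univ : Finset (Fin (r k * n))).filter
          (fun w => chi0 k n c₀ w = chi0 k n c₀ x₀) := by
        intro w hw
        simp only [mem_filter, mem_univ, true_and]
        exact hconst w hw x₀ hx₀
      exact le_trans (Finset.card_le_card hsub) (chi0_fiber_card k n c₀ hk hn _)
  have htot := Finset.card_eq_sum_card_fiberwise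
    (f := c) (s := (univ : Finset (Fin (r k * n)))) (t := univ) (fun x _ => mem_univ _)
  have hsum : ∑ β ∈ (univ : Finset (Fin (k-1))),
      ((univ : Finset (Fin (r k * n))).filter (fun w => c w = β)).card
      ≤ (k-1) * ((3*k+1)*n) := by
    calc _ ≤ ∑ β ∈ (univ : Finset (Fin (k-1))), (3*k+1)*n :=
          Finset.sum_le_sum (fun β _ => hclass β)
      _ = (k-1) * ((3*k+1)*n) := by simp [Finset.sum_const, Finset.card_univ]
  rw [Finset.card_univ, Fintype.card_fin] at htot
  have hr : r k = 3 * k * k := rfl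
  obtain ⟨m, hm⟩ : ∃ m, k = m + 1 := ⟨k-1, by omega⟩
  have hm2 : 2 ≤ m := by omega
  have hlt : (k-1) * ((3*k+1)*n) < 3*k*k*n := by
    subst hm
    simp only [Nat.add_sub_cancel]
    nlinarith
  have heq : r k * n = 3*k*k*n := by rw [hr]
  linarith [htot, hsum, hlt, heq]

lemma exists_Atrip (hk : 3 ≤ k) (hn : 0 < n) (c : Col k n) :
    ∃ T : Finset (Fin (r k * n)), T.card = 3 ∧
      (∀ x ∈ T, ∀ y ∈ T, c x = c y) ∧
      (∃ x ∈ T, ∃ y ∈ T, chi0 k n c₀ x ≠ chi0 k n c₀ y) := by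
  obtain ⟨x, y, z, hxy, hxz, hyz, hcy, hcz, hchi⟩ := straddle k n c₀ hk hn c
  refine ⟨{x, y, z}, Finset.card_eq_three.mpr ⟨x, y, z, hxy, hxz, hyz, rfl⟩, ?_,
    ⟨x, by simp, y, by simp, hchi⟩⟩
  have hval : ∀ a ∈ ({x, y, z} : Finset (Fin (r k * n))), c a = c x := by
    intro a ha
    rcases Finset.mem_insert.mp ha with rfl | ha
    · rfl
    rcases Finset.mem_insert.mp ha with rfl | ha
    · exact hcy
    rw [Finset.mem_singleton.mp ha]
    exact hcz
  intro a ha b hb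
  rw [hval a ha, hval b hb]

/-- the canonical straddling monochromatic triple for a label -/
def Atrip (hk : 3 ≤ k) (hn : 0 < n) (c : Col k n) : Finset (Fin (r k * n)) :=
  (exists_Atrip k n c₀ hk hn c).choose

lemma Atrip_card (hk : 3 ≤ k) (hn : 0 < n) (c : Col k n) :
    (Atrip k n c₀ hk hn c).card = 3 := (exists_Atrip k n c₀ hk hn c).choose_spec.1

lemma Atrip_mono (hk : 3 ≤ k) (hn : 0 < n) (c : Col k n) :
    ∀ x ∈ Atrip k n c₀ hk hn c, ∀ y ∈ Atrip k n c₀ hk hn c, c x = c y :=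
  (exists_Atrip k n c₀ hk hn c).choose_spec.2.1

lemma Atrip_straddle (hk : 3 ≤ k) (hn : 0 < n) (c : Col k n) :
    ∃ x ∈ Atrip k n c₀ hk hn c, ∃ y ∈ Atrip k n c₀ hk hn c,
      chi0 k n c₀ x ≠ chi0 k n c₀ y :=
  (exists_Atrip k n c₀ hk hn c).choose_spec.2.2

/-- the label served by the ordered pair of copies (i, s) -/
def serve (hk : 3 ≤ k) (hn : 0 < n) (i s : ℕ) : Col k n :=
  Lc k n hk hn (dst k n i s - 1)

/-- starts of blocks -/
def blockStarts : Finset ℕ := (range (t k n / r k)).image (· * r k)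

lemma blockStarts_bound {s : ℕ} (hs : s ∈ blockStarts k n) : s + r k ≤ t k n := by
  simp only [blockStarts, mem_image, mem_range] at hs
  obtain ⟨b, hb, rfl⟩ := hs
  calc b * r k + r k = (b+1) * r k := by ring
    _ ≤ (t k n / r k) * r k := Nat.mul_le_mul_right _ (by omega)
    _ ≤ t k n := Nat.div_mul_le_self _ _

lemma zero_mem_blockStarts (hk : 3 ≤ k) (hn : 0 < n) : 0 ∈ blockStarts k n := by
  have h1 := r_le_t k n hk hn
  have h2 := r_ge k hk
  rw [blockStarts]
  refine Finset.mem_image.mpr ⟨0, ?_, ?_⟩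
  · exact Finset.mem_range.mpr (Nat.div_pos h1 (by omega))
  · simp

lemma blockStarts_far {s s' : ℕ} (hs : s ∈ blockStarts k n) (hs' : s' ∈ blockStarts k n)
    (hne : s ≠ s') : s + r k ≤ s' ∨ s' + r k ≤ s := by
  simp only [blockStarts, mem_image, mem_range] at hs hs'
  obtain ⟨b, _, rfl⟩ := hs
  obtain ⟨b', _, rfl⟩ := hs'
  rcases Nat.lt_or_ge b b' with h | h
  · left; calc b * r k + r k = (b+1) * r k := by ring
      _ ≤ b' * r k := Nat.mul_le_mul_right _ (by omega)
  · right
    have hbb : b' < b := by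
      rcases Nat.lt_or_ge b' b with h2 | h2
      · exact h2
      · exact absurd (by omega : b = b') (fun e => hne (by rw [e]))
    calc b' * r k + r k = (b'+1) * r k := by ring
      _ ≤ b * r k := Nat.mul_le_mul_right _ (by omega)

/-- the blocks fully owned by copy i -/
def ownedBlocks (i : ℕ) : Finset ℕ :=
  (blockStarts k n).filter (fun s => 1 ≤ dst k n i s ∧ dst k n i s + r k ≤ W k n + 1)

/-- the leaf triple of the wish star from copy i into the block starting at s -/
def wishTriple (hk : 3 ≤ k) (hn : 0 < n) (i s : ℕ) : Finset (Fin (N k n)) :=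
  (Atrip k n c₀ hk hn (serve k n hk hn i s)).image (bv k n s)

lemma card_wishTriple (hk : 3 ≤ k) (hn : 0 < n) {i s : ℕ} (hs : s + r k ≤ t k n) :
    (wishTriple k n c₀ hk hn i s).card = 3 := by
  rw [wishTriple, Finset.card_image_of_injective _ (bv_inj k n hs)]
  exact Atrip_card k n c₀ hk hn _

lemma cpy_wishTriple (hk : 3 ≤ k) (hn : 0 < n) {i s : ℕ} (hs : s + r k ≤ t k n)
    {y : Fin (N k n)} (hy : y ∈ wishTriple k n c₀ hk hn i s) :
    s ≤ cpy k n y ∧ cpy k n y < s + r k := by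
  simp only [wishTriple, mem_image] at hy
  obtain ⟨w, _, rfl⟩ := hy
  rw [cpy_bv k n hs]
  refine ⟨Nat.le_add_right _ _, ?_⟩
  have h2 := bv_div k n (w := w)
  omega

lemma wishTriple_disjoint (hk : 3 ≤ k) (hn : 0 < n) {i i' s s' : ℕ}
    (hs : s ∈ blockStarts k n) (hs' : s' ∈ blockStarts k n) (hne : s ≠ s') :
    Disjoint (wishTriple k n c₀ hk hn i s) (wishTriple k n c₀ hk hn i' s') := by
  rw [Finset.disjoint_left]
  intro y hy hy'
  have h1 := cpy_wishTriple k n c₀ hk hn (blockStarts_bound k n hs) hy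
  have h2 := cpy_wishTriple k n c₀ hk hn (blockStarts_bound k n hs') hy'
  rcases blockStarts_far k n hs hs' hne with h | h <;> omega

/-- all wish leaves of (every vertex of) copy i -/
def wishLeaves (hk : 3 ≤ k) (hn : 0 < n) (i : ℕ) : Finset (Fin (N k n)) :=
  (ownedBlocks k n i).biUnion (fun s => wishTriple k n c₀ hk hn i s)

lemma card_wishLeaves (hk : 3 ≤ k) (hn : 0 < n) (i : ℕ) :
    (wishLeaves k n c₀ hk hn i).card = 3 * (ownedBlocks k n i).card := by
  have h1 : ∑ s ∈ ownedBlocks k n i, (wishTriple k n c₀ hk hn i s).card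
      = ∑ s ∈ ownedBlocks k n i, 3 :=
    Finset.sum_congr rfl (fun s hs => card_wishTriple k n c₀ hk hn
      (blockStarts_bound k n (Finset.mem_filter.mp hs).1))
  rw [wishLeaves, Finset.card_biUnion, h1, Finset.sum_const, smul_eq_mul, mul_comm]
  intro s hs s' hs' hne
  exact wishTriple_disjoint k n c₀ hk hn (Finset.mem_filter.mp hs).1
    (Finset.mem_filter.mp hs').1 hne

/-- the set of copies owned by copy i -/
def ownedCopies (i : ℕ) : Finset ℕ := (range (W k n)).image (fun s => (i + s + 1) % t k n)

/-- vertices of copy m -/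
def copyFinset (m : ℕ) : Finset (Fin (N k n)) := univ.filter (fun y => cpy k n y = m)

lemma W_lt_t : W k n < t k n := by simp [t]; omega

lemma mem_ownedCopies {i m : ℕ} (hi : i < t k n) :
    m ∈ ownedCopies k n i ↔ m < t k n ∧ 1 ≤ dst k n i m ∧ dst k n i m ≤ W k n := by
  have hW := W_lt_t k n
  constructor
  · intro hm
    simp only [ownedCopies, mem_image, mem_range] at hm
    obtain ⟨s, hsW, rfl⟩ := hm
    have h1 : (i + s + 1) % t k n < t k n := Nat.mod_lt _ (t_pos' k n)
    have h2 : dst k n i ((i + (s+1)) % t k n) = s + 1 :=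
      dst_add k n hi (by omega)
    rw [show i + s + 1 = i + (s+1) by omega]
    exact ⟨h1, by omega⟩
  · rintro ⟨hmt, h1, h2⟩
    simp only [ownedCopies, mem_image, mem_range]
    refine ⟨dst k n i m - 1, by omega, ?_⟩
    rw [show i + (dst k n i m - 1) + 1 = i + dst k n i m by omega]
    exact dst_inv k n hi hmt

/-- the full owned vertex set of copy i -/
def OWNED (i : ℕ) : Finset (Fin (N k n)) := (ownedCopies k n i).biUnion (copyFinset k n)

lemma mem_OWNED {i : ℕ} (hi : i < t k n) {y : Fin (N k n)} :
    y ∈ OWNED k n i ↔ 1 ≤ dst k n i (cpy k n y) ∧ dst k n i (cpy k n y) ≤ W k n := by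
  simp only [OWNED, mem_biUnion, copyFinset, mem_filter, mem_univ, true_and]
  constructor
  · rintro ⟨m, hm, rfl⟩
    exact ((mem_ownedCopies k n hi).mp hm).2
  · intro h
    exact ⟨cpy k n y, (mem_ownedCopies k n hi).mpr ⟨cpy_lt k n y, h⟩, rfl⟩

lemma copyFinset_eq {m : ℕ} (hm : m < t k n) :
    copyFinset k n m = univ.image (emb k n m) := by
  ext y
  constructor
  · intro hmem
    have h : cpy k n y = m := (Finset.mem_filter.mp hmem).2
    exact Finset.mem_image.mpr ⟨pos k n y, Finset.mem_univ _,
      by rw [← h]; exact emb_cpy_pos k n y⟩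
  · intro hmem
    obtain ⟨p, _, rfl⟩ := Finset.mem_image.mp hmem
    exact Finset.mem_filter.mpr ⟨Finset.mem_univ _, cpy_emb k n hm p⟩

lemma card_copyFinset {m : ℕ} (hm : m < t k n) (hn : 0 < n) :
    (copyFinset k n m).card = n := by
  rw [copyFinset_eq k n hm, Finset.card_image_of_injective, Finset.card_univ, Fintype.card_fin]
  intro p p' h
  have := congrArg Fin.val h
  rw [emb_val k n hm, emb_val k n hm] at this
  exact Fin.ext (by omega)

lemma card_ownedCopies {i : ℕ} (hi : i < t k n) : (ownedCopies k n i).card = W k n := by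
  rw [ownedCopies, Finset.card_image_of_injOn, Finset.card_range]
  intro s hs s' hs' h
  simp only [mem_coe, mem_range] at hs hs'
  have hW := W_lt_t k n
  have e1 : dst k n i ((i + (s+1)) % t k n) = s + 1 := dst_add k n hi (by omega)
  have e2 : dst k n i ((i + (s'+1)) % t k n) = s' + 1 := dst_add k n hi (by omega)
  simp only at h
  rw [show i + s + 1 = i + (s+1) by omega, show i + s' + 1 = i + (s'+1) by omega] at h
  rw [h] at e1
  omega

lemma card_OWNED {i : ℕ} (hi : i < t k n) (hn : 0 < n) :
    (OWNED k n i).card = W k n * n := by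
  rw [OWNED, Finset.card_biUnion]
  · rw [Finset.sum_congr rfl (fun m hm => card_copyFinset k n
      ((mem_ownedCopies k n hi).mp hm).1 hn)]
    rw [Finset.sum_const, card_ownedCopies k n hi, smul_eq_mul]
  · intro m hm m' hm' hne
    rw [Function.onFun, Finset.disjoint_left]
    intro y hy hy'
    simp only [copyFinset, mem_filter] at hy hy'
    exact hne (by rw [← hy.2, hy'.2])

lemma wishLeaves_subset_OWNED (hk : 3 ≤ k) (hn : 0 < n) {i : ℕ} (hi : i < t k n) :
    wishLeaves k n c₀ hk hn i ⊆ OWNED k n i := by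
  intro y hy
  simp only [wishLeaves, mem_biUnion] at hy
  obtain ⟨s, hsmem, hy⟩ := hy
  simp only [ownedBlocks, mem_filter] at hsmem
  obtain ⟨hsB, hd1, hd2⟩ := hsmem
  have hsb := blockStarts_bound k n hsB
  have hrk := r_ge k hk
  have hWt := W_lt_t k n
  have hcpy := cpy_wishTriple k n c₀ hk hn hsb hy
  rw [mem_OWNED k n hi]
  have hst : s < t k n := by omega
  have hcy : cpy k n y = s + (cpy k n y - s) := by omega
  rw [hcy, dst_shift k n hi hst (by omega) (by omega)]
  omega

/-- the owned vertices remaining after wish leaves are removed: to be used for fills -/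
def RESTF (hk : 3 ≤ k) (hn : 0 < n) (i : ℕ) : Finset (Fin (N k n)) :=
  OWNED k n i \ wishLeaves k n c₀ hk hn i

lemma card_RESTF (hk : 3 ≤ k) (hn : 0 < n) {i : ℕ} (hi : i < t k n) :
    (RESTF k n c₀ hk hn i).card = W k n * n - 3 * (ownedBlocks k n i).card := by
  rw [RESTF, Finset.card_sdiff_of_subset (wishLeaves_subset_OWNED k n c₀ hk hn hi),
    card_OWNED k n hi hn, card_wishLeaves]

lemma card_ownedBlocks (hk : 3 ≤ k) {i : ℕ} (hi : i < t k n) :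
    (ownedBlocks k n i).card ≤ W k n / r k + 1 := by
  have hrk := r_ge k hk
  have hWt := W_lt_t k n
  have hsep : ∀ s ∈ ownedBlocks k n i, ∀ s' ∈ ownedBlocks k n i, s ≠ s' →
      dst k n i s + r k ≤ dst k n i s' ∨ dst k n i s' + r k ≤ dst k n i s := by
    intro s hs s' hs' hne
    simp only [ownedBlocks, mem_filter] at hs hs'
    have hb := blockStarts_bound k n hs.1
    have hb' := blockStarts_bound k n hs'.1
    have hfar := blockStarts_far k n hs.1 hs'.1 hne
    rw [dst_eval k n hi (by omega), dst_eval k n hi (by omega)]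
    split <;> split <;> omega
  have hcard : (ownedBlocks k n i).card ≤ (range (W k n / r k + 1)).card := by
    apply Finset.card_le_card_of_injOn (fun s => (dst k n i s - 1) / r k)
    · intro s hs
      simp only [mem_coe] at hs
      have hs2 := (Finset.mem_filter.mp hs).2
      simp only [mem_coe, mem_range]
      have h1 : (dst k n i s - 1) / r k ≤ W k n / r k := Nat.div_le_div_right (by omega)
      omega
    · intro s hs s' hs' hss
      simp only [mem_coe] at hs hs'
      by_contra hne
      have h1 := (Finset.mem_filter.mp hs).2
      have h2 := (Finset.mem_filter.mp hs').2
      simp only at hss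
      rcases hsep s hs s' hs' hne with h | h
      · have hstep : (dst k n i s - 1) / r k + 1 ≤ (dst k n i s' - 1) / r k := by
          calc (dst k n i s - 1) / r k + 1 = (dst k n i s - 1 + r k) / r k :=
              (Nat.add_div_right _ (by omega)).symm
            _ ≤ (dst k n i s' - 1) / r k := Nat.div_le_div_right (by omega)
        omega
      · have hstep : (dst k n i s' - 1) / r k + 1 ≤ (dst k n i s - 1) / r k := by
          calc (dst k n i s' - 1) / r k + 1 = (dst k n i s' - 1 + r k) / r k :=
              (Nat.add_div_right _ (by omega)).symm
            _ ≤ (dst k n i s - 1) / r k := Nat.div_le_div_right (by omega)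
        omega
  simpa using hcard

end

end Stmt7Main
namespace Stmt7Main

open Finset

attribute [local instance] Classical.propDecidable

noncomputable section

variable (k n : ℕ) (c₀ : Fin n → Fin (k-1))

lemma div_add_div_le (x y d : ℕ) (hd : 0 < d) : x / d + y / d ≤ (x + y) / d := by
  rw [Nat.le_div_iff_mul_le hd]
  have hx := Nat.div_mul_le_self x d
  have hy := Nat.div_mul_le_self y d
  have : (x / d + y / d) * d = x/d*d + y/d*d := by ring
  omega

lemma ownedCopies_residue {i : ℕ} (hi : i < t k n) (hk0 : 0 < k) (a cg : ℕ) :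
    ((ownedCopies k n i).filter (fun m => (a + m) % k = cg)).card ≤ W k n / k + 2 := by
  have himg : (ownedCopies k n i).filter (fun m => (a + m) % k = cg)
      = ((range (W k n)).filter (fun s => (a + (i + s + 1) % t k n) % k = cg)).image
          (fun s => (i + s + 1) % t k n) := by
    ext m
    simp only [ownedCopies, mem_filter, Finset.mem_image, mem_range]
    constructor
    · rintro ⟨⟨s, hsW, rfl⟩, hc⟩
      exact ⟨s, ⟨hsW, hc⟩, rfl⟩
    · rintro ⟨s, ⟨hsW, hc⟩, rfl⟩
      exact ⟨⟨s, hsW, rfl⟩, hc⟩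
  rw [himg]
  apply le_trans Finset.card_image_le
  set s0 := t k n - i - 1 with hs0
  have hWt := W_lt_t k n
  have ht0 := t_pos' k n
  have hsplit : (range (W k n)).filter (fun s => (a + (i + s + 1) % t k n) % k = cg)
      ⊆ ((range (min (W k n) s0)).filter (fun s => (a + i + 1 + s) % k = cg))
        ∪ (((range (W k n - s0)).filter (fun j => (a + j) % k = cg)).image (fun j => j + s0)) := by
    intro s hs
    simp only [mem_filter, mem_range] at hs
    obtain ⟨hsW, hcond⟩ := hs
    rcases Nat.lt_or_ge s s0 with hcase | hcase
    · apply Finset.mem_union_left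
      simp only [mem_filter, mem_range, lt_min_iff]
      refine ⟨⟨hsW, hcase⟩, ?_⟩
      rw [Nat.mod_eq_of_lt (show i + s + 1 < t k n by omega)] at hcond
      rw [show a + i + 1 + s = a + (i + s + 1) by omega]
      exact hcond
    · apply Finset.mem_union_right
      simp only [Finset.mem_image, mem_filter, mem_range]
      refine ⟨s - s0, ⟨by omega, ?_⟩, by omega⟩
      have hm : (i + s + 1) % t k n = s - s0 := by
        have h1 : i + s + 1 = (s - s0) + t k n := by omega
        rw [h1, Nat.add_mod_right]
        exact Nat.mod_eq_of_lt (by omega)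
      rw [hm] at hcond
      exact hcond
  apply le_trans (Finset.card_le_card hsplit)
  apply le_trans (Finset.card_union_le _ _)
  have h1 := Stmt7Aux.runcount (a+i+1) (min (W k n) s0) k cg
  have h2 := Stmt7Aux.runcount a (W k n - s0) k cg
  have h3 := Finset.card_image_le
    (s := (range (W k n - s0)).filter (fun j => (a + j) % k = cg)) (f := fun j => j + s0)
  have h4 : min (W k n) s0 / k + (W k n - s0) / k ≤ W k n / k := by
    apply le_trans (div_add_div_le _ _ _ hk0)
    apply Nat.div_le_div_right
    omega
  omega

lemma bad_bound (hk : 3 ≤ k) (hn : 0 < n) {i : ℕ} (hi : i < t k n) (γ : Fin k) :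
    ((OWNED k n i).filter (fun y => chi k n c₀ y = γ)).card ≤ (W k n / k + 2) * n := by
  have hk0 : 0 < k := by omega
  set B := (OWNED k n i).filter (fun y => chi k n c₀ y = γ) with hB
  have hfib := Finset.card_eq_sum_card_fiberwise (f := fun y => pos k n y) (s := B)
    (t := univ) (fun x _ => mem_univ _)
  rw [hfib]
  have hbound : ∀ p : Fin n, (B.filter (fun y => pos k n y = p)).card ≤ W k n / k + 2 := by
    intro p
    have hinj : (B.filter (fun y => pos k n y = p)).card ≤
        ((ownedCopies k n i).filter (fun m => ((c₀ p).val + m) % k = γ.val)).card := by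
      apply Finset.card_le_card_of_injOn (fun y => cpy k n y)
      · intro y hy
        simp only [hB, mem_coe, mem_filter] at hy
        obtain ⟨⟨hyO, hychi⟩, hypos⟩ := hy
        simp only [mem_coe, mem_filter]
        refine ⟨(mem_ownedCopies k n hi).mpr ⟨cpy_lt k n y, (mem_OWNED k n hi).mp hyO⟩, ?_⟩
        have hval := congrArg Fin.val hychi
        simp only [chi] at hval
        rw [← hypos]
        exact hval
      · intro y hy y' hy' he
        simp only [hB, mem_coe, mem_filter] at hy hy'
        apply Fin.ext
        rw [val_eq k n y, val_eq k n y']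
        simp only at he
        rw [he, hy.2, hy'.2]
    exact le_trans hinj (ownedCopies_residue k n hi hk0 _ _)
  calc ∑ p ∈ (univ : Finset (Fin n)), (B.filter (fun y => pos k n y = p)).card
      ≤ ∑ _p ∈ (univ : Finset (Fin n)), (W k n / k + 2) :=
        Finset.sum_le_sum (fun p _ => hbound p)
    _ = n * (W k n / k + 2) := by simp [Finset.sum_const, Finset.card_univ]
    _ = (W k n / k + 2) * n := by ring

lemma fill_exists (hk : 3 ≤ k) (hn : 0 < n) (u : Fin (N k n)) :
    ∃ P : Finset (Finset (Fin (N k n))),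
      (∀ T ∈ P, T.card = 3 ∧ (T ∩ ((RESTF k n c₀ hk hn (cpy k n u)).filter
          (fun y => chi k n c₀ y ≠ chi k n c₀ u))).Nonempty) ∧
      (∀ T₁ ∈ P, ∀ T₂ ∈ P, T₁ ≠ T₂ → Disjoint T₁ T₂) ∧
      P.biUnion id = RESTF k n c₀ hk hn (cpy k n u) := by
  set i := cpy k n u with hidef
  have hi : i < t k n := cpy_lt k n u
  set X := RESTF k n c₀ hk hn i with hXdef
  set G := X.filter (fun y => chi k n c₀ y ≠ chi k n c₀ u) with hGdef
  set nb := (ownedBlocks k n i).card with hnbdef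
  -- numeric facts
  have hrge := r_ge k hk
  have hWge := W_ge k n hk hn
  have hcX : X.card = W k n * n - 3 * nb := card_RESTF k n c₀ hk hn hi
  have hnb : nb ≤ W k n / 27 + 1 := by
    have h1 := card_ownedBlocks k n hk hi
    have h2 : W k n / r k ≤ W k n / 27 := Nat.div_le_div_left hrge (by omega)
    omega
  have hWQ : W k n * n = 3 * ((M k n + r k) * n) := by
    have : W k n = 3 * (M k n + r k) := rfl
    rw [this]; ring
  have h3nb : 3 * nb ≤ W k n * n := by
    have h6 : W k n / 27 ≤ W k n := Nat.div_le_self _ _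
    have hWn : W k n ≤ W k n * n := Nat.le_mul_of_pos_right _ hn
    omega
  -- bad count inside X
  have hbadX : (X.filter (fun y => chi k n c₀ y = chi k n c₀ u)).card
      ≤ (W k n / k + 2) * n := by
    apply le_trans (Finset.card_le_card ?_) (bad_bound k n c₀ hk hn hi (chi k n c₀ u))
    intro y hy
    simp only [hXdef, RESTF, mem_filter, mem_sdiff] at hy ⊢
    exact ⟨hy.1.1, hy.2⟩
  have hGcard : G.card + (X.filter (fun y => chi k n c₀ y = chi k n c₀ u)).card
      = X.card := by
    rw [hGdef]
    rw [← Finset.card_filter_add_card_filter_not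
      (s := X) (p := fun y => chi k n c₀ y = chi k n c₀ u)]
    have hcc : (X.filter (fun y => ¬ chi k n c₀ y = chi k n c₀ u)).card
        = (X.filter (fun y => chi k n c₀ y ≠ chi k n c₀ u)).card := rfl
    omega
  -- main inequality : X.card ≤ 3 * G.card
  have hmain : X.card ≤ 3 * G.card := by
    have hdk : W k n / k ≤ W k n / 3 := Nat.div_le_div_left hk (by omega)
    have hd3 : 3 * (W k n / 3) = W k n := by
      have : W k n = 3 * (M k n + r k) := rfl
      rw [this, Nat.mul_div_cancel_left _ (by omega : 0 < 3)]
    -- 3 * bad ≤ (W + 6) * n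
    have hb1 : 3 * ((W k n / k + 2) * n) ≤ (W k n + 6) * n := by
      have : 3 * ((W k n / k + 2) * n) = (3 * (W k n / k) + 6) * n := by ring
      rw [this]
      apply Nat.mul_le_mul_right
      omega
    have hexp : (W k n + 6) * n = W k n * n + 6 * n := by ring
    -- 6 * nb + 6 * n ≤ W*n
    have h27 : 6 * (W k n / 27) ≤ W k n / 4 := by
      have e1 : W k n / 27 ≤ W k n / 24 := Nat.div_le_div_left (by omega) (by omega)
      have e2 : 6 * (W k n / 24) ≤ 6 * W k n / 24 := Nat.mul_div_le_mul_div_assoc _ _ _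
      have e3 : 6 * W k n / 24 = W k n / 4 := by
        have : (24 : ℕ) = 6 * 4 := by norm_num
        rw [this, Nat.mul_div_mul_left _ _ (by omega : 0 < 6)]
      omega
    have hW4 : W k n / 4 ≤ W k n := Nat.div_le_self _ _
    have hWn81 : 81 * n ≤ W k n * n := Nat.mul_le_mul_right _ hWge
    have hWn1 : W k n ≤ W k n * n := Nat.le_mul_of_pos_right _ hn
    have h4W : 4 * (W k n / 4) ≤ W k n := by
      have := Nat.div_mul_le_self (W k n) 4
      omega
    -- conclude
    have hkey : 6 * nb + 6 * n ≤ W k n * n := by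
      have e2 : 6 * nb ≤ W k n / 4 + 6 := by omega
      have e3 : 12 * nb + 12 * n ≤ W k n + 81 * n := by omega
      omega
    omega
  -- divisibility
  obtain ⟨mm, hmm⟩ : ∃ mm, X.card = 3 * mm := by
    refine ⟨(M k n + r k) * n - nb, by omega⟩
  obtain ⟨P, h1, h2, h3⟩ := Stmt7Aux.good_partition mm X G
    (Finset.filter_subset _ _) hmm hmain
  exact ⟨P, h1, h2, h3⟩

/-- the fill partition for the owned leftover set of vertex u -/
def fillP (hk : 3 ≤ k) (hn : 0 < n) (u : Fin (N k n)) : Finset (Finset (Fin (N k n))) :=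
  (fill_exists k n c₀ hk hn u).choose

lemma fillP_card (hk : 3 ≤ k) (hn : 0 < n) (u : Fin (N k n)) :
    ∀ T ∈ fillP k n c₀ hk hn u, T.card = 3 :=
  fun T hT => ((fill_exists k n c₀ hk hn u).choose_spec.1 T hT).1

lemma fillP_good (hk : 3 ≤ k) (hn : 0 < n) (u : Fin (N k n)) :
    ∀ T ∈ fillP k n c₀ hk hn u, ∃ y ∈ T, chi k n c₀ y ≠ chi k n c₀ u := by
  intro T hT
  obtain ⟨y, hy⟩ := ((fill_exists k n c₀ hk hn u).choose_spec.1 T hT).2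
  rw [Finset.mem_inter, Finset.mem_filter] at hy
  exact ⟨y, hy.1, hy.2.2⟩

lemma fillP_disj (hk : 3 ≤ k) (hn : 0 < n) (u : Fin (N k n)) :
    ∀ T₁ ∈ fillP k n c₀ hk hn u, ∀ T₂ ∈ fillP k n c₀ hk hn u, T₁ ≠ T₂ → Disjoint T₁ T₂ :=
  (fill_exists k n c₀ hk hn u).choose_spec.2.1

lemma fillP_union (hk : 3 ≤ k) (hn : 0 < n) (u : Fin (N k n)) :
    (fillP k n c₀ hk hn u).biUnion id = RESTF k n c₀ hk hn (cpy k n u) :=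
  (fill_exists k n c₀ hk hn u).choose_spec.2.2

lemma fillP_subset (hk : 3 ≤ k) (hn : 0 < n) (u : Fin (N k n)) :
    ∀ T ∈ fillP k n c₀ hk hn u, T ⊆ RESTF k n c₀ hk hn (cpy k n u) := by
  intro T hT y hy
  rw [← fillP_union k n c₀ hk hn u]
  exact Finset.mem_biUnion.mpr ⟨T, hT, hy⟩

end

end Stmt7Main
namespace Stmt7Main

open Finset

attribute [local instance] Classical.propDecidable

noncomputable section

variable (k n : ℕ) (c₀ : Fin n → Fin (k-1)) (sys : EStarSystem n 3)

lemma emb_inj (m : ℕ) : Function.Injective (emb k n m) := by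
  intro p p' h
  have := congrArg Fin.val h
  simp only [emb] at this
  exact Fin.ext (by omega)

/-- the embedded copy of a base star in copy m -/
def embStar (m : ℕ) (s₀ : EStar n 3) : EStar (N k n) 3 where
  centre := emb k n m s₀.centre
  leaves := s₀.leaves.image (emb k n m)
  card_leaves := by
    rw [Finset.card_image_of_injective _ (emb_inj k n m), s₀.card_leaves]
  centre_not_leaf := by
    intro h
    obtain ⟨a, ha, hae⟩ := Finset.mem_image.mp h
    exact s₀.centre_not_leaf (by rwa [emb_inj k n m hae] at ha)

lemma mem_OWNED_ne {i : ℕ} (hi : i < t k n) {y : Fin (N k n)}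
    (hy : y ∈ OWNED k n i) : cpy k n y ≠ i := by
  rw [mem_OWNED k n hi] at hy
  intro h
  rw [h, dst_self k n hi] at hy
  omega

lemma RESTF_subset_OWNED (hk : 3 ≤ k) (hn : 0 < n) (i : ℕ) :
    RESTF k n c₀ hk hn i ⊆ OWNED k n i := Finset.sdiff_subset

lemma mem_wishLeaves_iff (hk : 3 ≤ k) (hn : 0 < n) (i : ℕ) (y : Fin (N k n)) :
    y ∈ wishLeaves k n c₀ hk hn i ↔
      ∃ s ∈ ownedBlocks k n i, y ∈ wishTriple k n c₀ hk hn i s := Finset.mem_biUnion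

/-- the wish star with centre u aimed at the block starting at s -/
def wishStar (hk : 3 ≤ k) (hn : 0 < n) (u : Fin (N k n)) (s : ℕ)
    (hs : s ∈ ownedBlocks k n (cpy k n u)) : EStar (N k n) 3 where
  centre := u
  leaves := wishTriple k n c₀ hk hn (cpy k n u) s
  card_leaves := card_wishTriple k n c₀ hk hn
    (blockStarts_bound k n (Finset.mem_filter.mp hs).1)
  centre_not_leaf := by
    intro h
    have hmem : u ∈ wishLeaves k n c₀ hk hn (cpy k n u) :=
      (mem_wishLeaves_iff k n c₀ hk hn _ u).mpr ⟨s, hs, h⟩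
    have hOwn := wishLeaves_subset_OWNED k n c₀ hk hn (cpy_lt k n u) hmem
    exact mem_OWNED_ne k n (cpy_lt k n u) hOwn rfl

/-- a fill star with centre u -/
def fillStar (hk : 3 ≤ k) (hn : 0 < n) (u : Fin (N k n)) (T : Finset (Fin (N k n)))
    (hT : T ∈ fillP k n c₀ hk hn u) : EStar (N k n) 3 where
  centre := u
  leaves := T
  card_leaves := fillP_card k n c₀ hk hn u T hT
  centre_not_leaf := by
    intro h
    have h1 := fillP_subset k n c₀ hk hn u T hT h
    have h2 := RESTF_subset_OWNED k n c₀ hk hn _ h1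
    exact mem_OWNED_ne k n (cpy_lt k n u) h2 rfl

/-- the predicate describing the stars of the new system -/
def isTStar (hk : 3 ≤ k) (hn : 0 < n) (S : EStar (N k n) 3) : Prop :=
  (∃ s₀ ∈ sys.stars, S = embStar k n (cpy k n S.centre) s₀)
  ∨ (∃ s ∈ ownedBlocks k n (cpy k n S.centre),
      S.leaves = wishTriple k n c₀ hk hn (cpy k n S.centre) s)
  ∨ (S.leaves ∈ fillP k n c₀ hk hn S.centre)

/-- the stars of the new system -/
def Tstars (hk : 3 ≤ k) (hn : 0 < n) : Finset (EStar (N k n) 3) :=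
  univ.filter (isTStar k n c₀ sys hk hn)

lemma mem_Tstars (hk : 3 ≤ k) (hn : 0 < n) (S : EStar (N k n) 3) :
    S ∈ Tstars k n c₀ sys hk hn ↔ isTStar k n c₀ sys hk hn S := by
  simp [Tstars]

/-- every leaf of an embedded star lies in the same copy as the centre -/
lemma embStar_leaf_cpy {m : ℕ} (hm : m < t k n) {s₀ : EStar n 3} {a : Fin (N k n)}
    (ha : a ∈ (embStar k n m s₀).leaves) : cpy k n a = m := by
  obtain ⟨b, _, rfl⟩ := Finset.mem_image.mp ha
  exact cpy_emb k n hm b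

/-- every leaf of a cross star (wish or fill) is owned by the centre's copy -/
lemma cross_leaf_owned (hk : 3 ≤ k) (hn : 0 < n) {S : EStar (N k n) 3}
    (hS : isTStar k n c₀ sys hk hn S)
    (hnot : ¬ ∃ s₀ ∈ sys.stars, S = embStar k n (cpy k n S.centre) s₀) :
    ∀ a ∈ S.leaves, a ∈ OWNED k n (cpy k n S.centre) := by
  intro a ha
  rcases hS with h | h | h
  · exact absurd h hnot
  · obtain ⟨s, hs, hleaves⟩ := h
    rw [hleaves] at ha
    exact wishLeaves_subset_OWNED k n c₀ hk hn (cpy_lt k n S.centre)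
      ((mem_wishLeaves_iff k n c₀ hk hn _ a).mpr ⟨s, hs, ha⟩)
  · exact RESTF_subset_OWNED k n c₀ hk hn _ (fillP_subset k n c₀ hk hn _ _ h ha)

lemma own_xor {i m : ℕ} (hi : i < t k n) (hm : m < t k n) (hne : i ≠ m) :
    (1 ≤ dst k n i m ∧ dst k n i m ≤ W k n) ↔
      ¬ (1 ≤ dst k n m i ∧ dst k n m i ≤ W k n) := by
  have h1 := dst_rev k n hi hm hne
  have h2 : dst k n i m ≠ 0 := by
    rw [Ne, dst_eq_zero_iff k n hi hm]; omega
  have h3 : dst k n m i ≠ 0 := by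
    rw [Ne, dst_eq_zero_iff k n hm hi]; omega
  have ht : t k n = 2 * W k n + 1 := rfl
  omega

end

end Stmt7Main
namespace Stmt7Main

open Finset

attribute [local instance] Classical.propDecidable

noncomputable section

variable (k n : ℕ) (c₀ : Fin n → Fin (k-1)) (sys : EStarSystem n 3)

lemma cross_unique (hk : 3 ≤ k) (hn : 0 < n) (x y : Fin (N k n))
    (hne : cpy k n x ≠ cpy k n y) (hown : y ∈ OWNED k n (cpy k n x)) :
    ∃! S, S ∈ Tstars k n c₀ sys hk hn ∧ s(x,y) ∈ EStar.edges S := by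
  have hi : cpy k n x < t k n := cpy_lt k n x
  -- structure of any star containing this edge
  have huniq : ∀ S, (S ∈ Tstars k n c₀ sys hk hn ∧ s(x,y) ∈ EStar.edges S) →
      S.centre = x ∧ y ∈ S.leaves ∧
      ((∃ s ∈ ownedBlocks k n (cpy k n x),
          S.leaves = wishTriple k n c₀ hk hn (cpy k n x) s) ∨
        S.leaves ∈ fillP k n c₀ hk hn x) := by
    rintro S ⟨hSmem, hSedge⟩
    rw [mem_Tstars] at hSmem
    obtain ⟨a, haleaf, haedge⟩ := Stmt7Aux.mem_edges.mp hSedge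
    have hcases := Sym2.eq_iff.mp haedge
    have hnotemb : ¬ ∃ s₀ ∈ sys.stars, S = embStar k n (cpy k n S.centre) s₀ := by
      rintro ⟨s₀, _, heq⟩
      have hla : a ∈ (embStar k n (cpy k n S.centre) s₀).leaves := by
        rw [← heq]; exact haleaf
      have h1 : cpy k n a = cpy k n S.centre :=
        embStar_leaf_cpy k n (cpy_lt k n S.centre) hla
      rcases hcases with ⟨hc, hl⟩ | ⟨hc, hl⟩ <;> rw [hc, hl] at h1
      · exact hne h1.symm
      · exact hne h1
    have howned := cross_leaf_owned k n c₀ sys hk hn hSmem hnotemb a haleaf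
    rcases hcases with ⟨hc, hl⟩ | ⟨hc, hl⟩
    · refine ⟨hc, hl ▸ haleaf, ?_⟩
      rcases hSmem with h | h | h
      · exact absurd h hnotemb
      · obtain ⟨s, hsmem, hleq⟩ := h
        rw [hc] at hsmem hleq
        exact Or.inl ⟨s, hsmem, hleq⟩
      · rw [hc] at h
        exact Or.inr h
    · exfalso
      rw [hc, hl] at howned
      have h1 := (mem_OWNED k n (cpy_lt k n y)).mp howned
      have h2 := (mem_OWNED k n hi).mp hown
      have h3 := own_xor k n hi (cpy_lt k n y) hne
      tauto
  by_cases hw : y ∈ wishLeaves k n c₀ hk hn (cpy k n x)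
  · -- wish star case
    obtain ⟨s, hs, hyT⟩ := (mem_wishLeaves_iff k n c₀ hk hn _ y).mp hw
    refine ⟨wishStar k n c₀ hk hn x s hs, ⟨?_, ?_⟩, ?_⟩
    · rw [mem_Tstars]
      exact Or.inr (Or.inl ⟨s, hs, rfl⟩)
    · exact Stmt7Aux.mem_edges.mpr ⟨y, hyT, rfl⟩
    · intro S' hS'
      obtain ⟨hc', hy', hcase'⟩ := huniq S' hS'
      rcases hcase' with ⟨s', hs', hleq'⟩ | hfill'
      · have hss : s' = s := by
          by_contra hne'
          have hdisj := wishTriple_disjoint k n c₀ hk hn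
            (i := cpy k n x) (i' := cpy k n x)
            (Finset.mem_filter.mp hs').1 (Finset.mem_filter.mp hs).1 hne'
          exact Finset.disjoint_left.mp hdisj (hleq' ▸ hy') hyT
        exact Stmt7Aux.estar_ext hc' (by rw [hleq', hss]; rfl)
      · exfalso
        have h1 := fillP_subset k n c₀ hk hn x _ hfill' hy'
        rw [RESTF, Finset.mem_sdiff] at h1
        exact h1.2 hw
  · -- fill star case
    have hyR : y ∈ RESTF k n c₀ hk hn (cpy k n x) :=
      Finset.mem_sdiff.mpr ⟨hown, hw⟩
    have hyB : y ∈ (fillP k n c₀ hk hn x).biUnion id := by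
      rw [fillP_union k n c₀ hk hn x]; exact hyR
    obtain ⟨T, hT, hyT⟩ := Finset.mem_biUnion.mp hyB
    refine ⟨fillStar k n c₀ hk hn x T hT, ⟨?_, ?_⟩, ?_⟩
    · rw [mem_Tstars]
      exact Or.inr (Or.inr hT)
    · exact Stmt7Aux.mem_edges.mpr ⟨y, hyT, rfl⟩
    · intro S' hS'
      obtain ⟨hc', hy', hcase'⟩ := huniq S' hS'
      rcases hcase' with ⟨s', hs', hleq'⟩ | hfill'
      · exfalso
        apply hw
        exact (mem_wishLeaves_iff k n c₀ hk hn _ y).mpr ⟨s', hs', hleq' ▸ hy'⟩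
      · have hTT : S'.leaves = T := by
          by_contra hne'
          have hdisj := fillP_disj k n c₀ hk hn x _ hfill' _ hT hne'
          exact Finset.disjoint_left.mp hdisj hy' hyT
        exact Stmt7Aux.estar_ext hc' hTT
theorem Tpartition (hk : 3 ≤ k) (hn : 0 < n) :
    ∀ p : Sym2 (Fin (N k n)), ¬ p.IsDiag →
      ∃! S, S ∈ Tstars k n c₀ sys hk hn ∧ p ∈ EStar.edges S := by
  intro p hp
  induction p using Sym2.inductionOn with
  | hf x y =>
    have hxy : x ≠ y := by rwa [Sym2.mk_isDiag_iff] at hp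
    rcases eq_or_ne (cpy k n x) (cpy k n y) with hcc | hcc
    · -- same copy
      have hm : cpy k n x < t k n := cpy_lt k n x
      have hpos : pos k n x ≠ pos k n y := by
        intro h
        apply hxy
        apply Fin.ext
        rw [val_eq k n x, val_eq k n y, hcc, h]
      have hqd : ¬ (s(pos k n x, pos k n y)).IsDiag := by
        rw [Sym2.mk_isDiag_iff]; exact hpos
      obtain ⟨s₀, ⟨hs₀mem, hs₀edge⟩, hs₀uniq⟩ := sys.partition _ hqd
      have hex : emb k n (cpy k n x) (pos k n x) = x := emb_cpy_pos k n x
      have hey : emb k n (cpy k n x) (pos k n y) = y := by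
        rw [hcc]; exact emb_cpy_pos k n y
      refine ⟨embStar k n (cpy k n x) s₀, ⟨?_, ?_⟩, ?_⟩
      · rw [mem_Tstars]
        refine Or.inl ⟨s₀, hs₀mem, ?_⟩
        congr 1
        exact (cpy_emb k n hm s₀.centre).symm
      · obtain ⟨b, hb, hbe⟩ := Stmt7Aux.mem_edges.mp hs₀edge
        apply Stmt7Aux.mem_edges.mpr
        refine ⟨emb k n (cpy k n x) b, Finset.mem_image_of_mem _ hb, ?_⟩
        rcases Sym2.eq_iff.mp hbe with ⟨hc, hl⟩ | ⟨hc, hl⟩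
        · have h1 : emb k n (cpy k n x) s₀.centre = x := by rw [hc]; exact hex
          have h2 : emb k n (cpy k n x) b = y := by rw [hl]; exact hey
          show s(emb k n (cpy k n x) s₀.centre, emb k n (cpy k n x) b) = s(x, y)
          rw [h1, h2]
        · have h1 : emb k n (cpy k n x) s₀.centre = y := by rw [hc]; exact hey
          have h2 : emb k n (cpy k n x) b = x := by rw [hl]; exact hex
          show s(emb k n (cpy k n x) s₀.centre, emb k n (cpy k n x) b) = s(x, y)
          rw [h1, h2, Sym2.eq_swap]
      · rintro S' ⟨hS'mem, hS'edge⟩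
        rw [mem_Tstars] at hS'mem
        obtain ⟨a, haleaf, haedge⟩ := Stmt7Aux.mem_edges.mp hS'edge
        have hcases := Sym2.eq_iff.mp haedge
        -- the centre and leaf both lie in copy (cpy x)
        have hcentre_cpy : cpy k n S'.centre = cpy k n x := by
          rcases hcases with ⟨hc, _⟩ | ⟨hc, _⟩
          · rw [hc]
          · rw [hc, hcc]
        -- S' must be an embedded star
        have hemb : ∃ s₀' ∈ sys.stars, S' = embStar k n (cpy k n S'.centre) s₀' := by
          rcases hS'mem with h | h | h
          · exact h
          · exfalso
            obtain ⟨s, hsmem, hleq⟩ := h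
            have howned : a ∈ OWNED k n (cpy k n S'.centre) := by
              rw [hleq] at haleaf
              exact wishLeaves_subset_OWNED k n c₀ hk hn (cpy_lt k n S'.centre)
                ((mem_wishLeaves_iff k n c₀ hk hn _ a).mpr ⟨s, hsmem, haleaf⟩)
            have hanei := mem_OWNED_ne k n (cpy_lt k n S'.centre) howned
            apply hanei
            rw [hcentre_cpy]
            rcases hcases with ⟨hc, hl⟩ | ⟨hc, hl⟩
            · rw [hl, ← hcc]
            · rw [hl]
          · exfalso
            have howned : a ∈ OWNED k n (cpy k n S'.centre) :=
              RESTF_subset_OWNED k n c₀ hk hn _ (fillP_subset k n c₀ hk hn _ _ h haleaf)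
            have hanei := mem_OWNED_ne k n (cpy_lt k n S'.centre) howned
            apply hanei
            rw [hcentre_cpy]
            rcases hcases with ⟨hc, hl⟩ | ⟨hc, hl⟩
            · rw [hl, ← hcc]
            · rw [hl]
        obtain ⟨s₀', hs₀'mem, hS'eq⟩ := hemb
        rw [hcentre_cpy] at hS'eq
        -- extract the base leaf
        have haleaf' : a ∈ (embStar k n (cpy k n x) s₀').leaves := by
          rw [← hS'eq]; exact haleaf
        obtain ⟨b', hb', hb'e⟩ := Finset.mem_image.mp haleaf'
        have hcentre' : S'.centre = emb k n (cpy k n x) s₀'.centre := by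
          rw [hS'eq]; rfl
        -- the base edge is q
        have hqedge : s(pos k n x, pos k n y) ∈ EStar.edges s₀' := by
          apply Stmt7Aux.mem_edges.mpr
          rcases hcases with ⟨hc, hl⟩ | ⟨hc, hl⟩
          · -- centre = x, a = y
            refine ⟨b', hb', ?_⟩
            have h1 : s₀'.centre = pos k n x := by
              have := congrArg (pos k n) (hcentre'.symm.trans hc)
              rwa [pos_emb k n hm] at this
            have h2 : b' = pos k n y := by
              have := congrArg (pos k n) (hb'e.trans hl)
              rwa [pos_emb k n hm] at this
            rw [h1, h2]
          · refine ⟨b', hb', ?_⟩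
            have h1 : s₀'.centre = pos k n y := by
              have := congrArg (pos k n) (hcentre'.symm.trans hc)
              rwa [pos_emb k n hm] at this
            have h2 : b' = pos k n x := by
              have := congrArg (pos k n) (hb'e.trans hl)
              rwa [pos_emb k n hm] at this
            rw [h1, h2, Sym2.eq_swap]
        have hfin : s₀' = s₀ := hs₀uniq s₀' ⟨hs₀'mem, hqedge⟩
        rw [hS'eq, hfin]
    · -- cross copies
      have hd := own_xor k n (cpy_lt k n x) (cpy_lt k n y) hcc
      by_cases hdir : 1 ≤ dst k n (cpy k n x) (cpy k n y) ∧
          dst k n (cpy k n x) (cpy k n y) ≤ W k n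
      · exact cross_unique k n c₀ sys hk hn x y hcc
          ((mem_OWNED k n (cpy_lt k n x)).mpr hdir)
      · have hdir' : 1 ≤ dst k n (cpy k n y) (cpy k n x) ∧
            dst k n (cpy k n y) (cpy k n x) ≤ W k n := by tauto
        rw [show s(x,y) = s(y,x) from Sym2.eq_swap]
        exact cross_unique k n c₀ sys hk hn y x hcc.symm
          ((mem_OWNED k n (cpy_lt k n y)).mpr hdir')

/-- the new 3-star system -/
def Tsys (hk : 3 ≤ k) (hn : 0 < n) : EStarSystem (N k n) 3 where
  stars := Tstars k n c₀ sys hk hn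
  partition := Tpartition k n c₀ sys hk hn

end

end Stmt7Main
namespace Stmt7Main

open Finset

attribute [local instance] Classical.propDecidable

noncomputable section

variable (k n : ℕ) (c₀ : Fin n → Fin (k-1)) (sys : EStarSystem n 3)

lemma chi_emb {m : ℕ} (hm : m < t k n) (p : Fin n) :
    (chi k n c₀ (emb k n m p)).val = ((c₀ p).val + m) % k := by
  simp [chi, cpy_emb k n hm, pos_emb k n hm]

lemma chi_emb_ne {m : ℕ} (hm : m < t k n) {p q : Fin n} (hpq : c₀ p ≠ c₀ q) :
    chi k n c₀ (emb k n m p) ≠ chi k n c₀ (emb k n m q) := by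
  intro h
  apply hpq
  have h1 := congrArg Fin.val h
  rw [chi_emb k n c₀ hm, chi_emb k n c₀ hm] at h1
  have h2 : (c₀ p).val % k = (c₀ q).val % k := Nat.ModEq.add_right_cancel' m h1
  have hpk : (c₀ p).val < k := by have := (c₀ p).isLt; omega
  have hqk : (c₀ q).val < k := by have := (c₀ q).isLt; omega
  apply Fin.ext
  rwa [Nat.mod_eq_of_lt hpk, Nat.mod_eq_of_lt hqk] at h2

theorem chi_weak (hk : 3 ≤ k) (hn : 0 < n) (hc₀ : IsWeakColouring sys c₀) :
    IsWeakColouring (Tsys k n c₀ sys hk hn) (chi k n c₀) := by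
  intro S hS
  have hmem : isTStar k n c₀ sys hk hn S := by
    rwa [← mem_Tstars k n c₀ sys hk hn]
  rcases hmem with ⟨s₀, hs₀, heq⟩ | ⟨s, hs, hleq⟩ | h
  · -- embedded star
    obtain ⟨b, hb, hbne⟩ := hc₀ s₀ hs₀
    set m := cpy k n S.centre with hmdef
    have hm : m < t k n := by rw [hmdef]; exact cpy_lt k n S.centre
    refine ⟨emb k n m b, ?_, ?_⟩
    · rw [heq]
      exact Finset.mem_image_of_mem (emb k n m) hb
    · have hcen : S.centre = emb k n m s₀.centre := by
        rw [heq]; rfl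
      rw [hcen]
      exact chi_emb_ne k n c₀ hm hbne
  · -- wish star
    have hsb : s + r k ≤ t k n :=
      blockStarts_bound k n (Finset.mem_filter.mp hs).1
    obtain ⟨w1, hw1, w2, hw2, hne⟩ :=
      Atrip_straddle k n c₀ hk hn (serve k n hk hn (cpy k n S.centre) s)
    have hbne := chi_bv_ne k n c₀ hsb hne
    by_cases hcase : chi k n c₀ (bv k n s w1) = chi k n c₀ S.centre
    · refine ⟨bv k n s w2, ?_, ?_⟩
      · rw [hleq]
        exact Finset.mem_image_of_mem _ hw2
      · rw [← hcase]
        exact fun hcon => hbne hcon.symm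
    · exact ⟨bv k n s w1, by rw [hleq]; exact Finset.mem_image_of_mem _ hw1, hcase⟩
  · -- fill star
    exact fillP_good k n c₀ hk hn S.centre S.leaves h

lemma weak_surj (hk : 3 ≤ k) (hnc : ¬ Colourable sys (k-2)) (c : Fin n → Fin (k-1))
    (hc : IsWeakColouring sys c) : ∀ β, ∃ p, c p = β := by
  by_contra hcon
  push_neg at hcon
  obtain ⟨β, hβ⟩ := hcon
  apply hnc
  have hmap : ∀ p : Fin n, (if (c p).val < β.val then (c p).val else (c p).val - 1) < k - 2 := by
    intro p
    have h1 := (c p).isLt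
    have h2 := β.isLt
    have h3 : (c p).val ≠ β.val := fun h => hβ p (Fin.ext h)
    split_ifs <;> omega
  refine ⟨fun p => ⟨if (c p).val < β.val then (c p).val else (c p).val - 1, hmap p⟩, ?_⟩
  intro s₀ hs₀
  obtain ⟨a, ha, hane⟩ := hc s₀ hs₀
  refine ⟨a, ha, ?_⟩
  intro h
  apply hane
  have hva := congrArg Fin.val h
  simp only at hva
  have h3 : (c a).val ≠ β.val := fun h => hβ a (Fin.ext h)
  have h4 : (c s₀.centre).val ≠ β.val := fun h => hβ s₀.centre (Fin.ext h)
  apply Fin.ext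
  split_ifs at hva <;> omega

theorem kill (hk : 3 ≤ k) (hn : 0 < n) (hnc : ¬ Colourable sys (k-2)) :
    ¬ Colourable (Tsys k n c₀ sys hk hn) (k-1) := by
  rintro ⟨φ, hφ⟩
  -- the restriction of φ to any copy is a weak colouring of sys
  have hres : ∀ i, i < t k n → IsWeakColouring sys (fun p => φ (emb k n i p)) := by
    intro i hi s₀ hs₀
    have hmem : embStar k n i s₀ ∈ (Tsys k n c₀ sys hk hn).stars := by
      rw [Tsys, mem_Tstars]
      refine Or.inl ⟨s₀, hs₀, ?_⟩
      congr 1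
      exact (cpy_emb k n hi s₀.centre).symm
    obtain ⟨a, ha, hane⟩ := hφ _ hmem
    obtain ⟨b, hb, rfl⟩ := Finset.mem_image.mp ha
    exact ⟨b, hb, hane⟩
  -- the label of block 0
  set c : Col k n := fun w => φ (bv k n 0 w) with hcdef
  set d : ℕ := idx k n c + 1 with hddef
  have hidxM := idx_lt k n c
  have hMW : M k n + r k ≤ W k n := by
    have : W k n = 3 * (M k n + r k) := rfl
    omega
  have hWt := W_lt_t k n
  have hMpos := M_pos k n hk hn
  have hrge := r_ge k hk
  set i : ℕ := t k n - d with hidef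
  have hd1 : 1 ≤ d := by omega
  have hdW : d ≤ M k n := by omega
  have hit : i < t k n := by omega
  have hdst : dst k n i 0 = d := by
    have h1 : 0 + t k n - i = d := by omega
    rw [dst, h1]
    exact Nat.mod_eq_of_lt (by omega)
  have hblock : 0 ∈ ownedBlocks k n i := by
    rw [ownedBlocks, Finset.mem_filter]
    exact ⟨zero_mem_blockStarts k n hk hn, by omega, by omega⟩
  have hserve : serve k n hk hn i 0 = c := by
    rw [serve, hdst]
    have : d - 1 = idx k n c := by omega
    rw [this]
    exact Lc_idx k n hk hn c
  -- a monochromatic wish star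
  obtain ⟨x₁, hx₁⟩ := Finset.card_pos.mp
    (show 0 < (Atrip k n c₀ hk hn c).card by rw [Atrip_card]; omega)
  obtain ⟨p, hp⟩ := weak_surj k n sys hk hnc _ (hres i hit) (c x₁)
  set u : Fin (N k n) := emb k n i p with hudef
  have hcu : cpy k n u = i := cpy_emb k n hit p
  have hblocku : 0 ∈ ownedBlocks k n (cpy k n u) := by rw [hcu]; exact hblock
  have hmem : wishStar k n c₀ hk hn u 0 hblocku ∈ (Tsys k n c₀ sys hk hn).stars := by
    rw [Tsys, mem_Tstars]
    exact Or.inr (Or.inl ⟨0, hblocku, rfl⟩)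
  obtain ⟨a, ha, hane⟩ := hφ _ hmem
  -- a is a bv-image of an element of the canonical triple
  have ha' : a ∈ (Atrip k n c₀ hk hn c).image (bv k n 0) := by
    have : a ∈ wishTriple k n c₀ hk hn (cpy k n u) 0 := ha
    rw [wishTriple, hcu, hserve] at this
    exact this
  obtain ⟨w, hw, rfl⟩ := Finset.mem_image.mp ha'
  apply hane
  have h1 : φ (bv k n 0 w) = c w := rfl
  have h2 : c w = c x₁ := Atrip_mono k n c₀ hk hn c w hw x₁ hx₁
  have h3 : (wishStar k n c₀ hk hn u 0 hblocku).centre = u := rfl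
  rw [h3, h1, h2, ← hp]

end

end Stmt7Main

namespace Stmt7Main

lemma no_stars_of_zero (sys : EStarSystem 0 3) (κ : ℕ) : Colourable sys κ := by
  refine ⟨fun p => p.elim0, ?_⟩
  intro S hS
  exfalso
  have h1 : S.leaves.card ≤ 0 := by
    have := Finset.card_le_card (Finset.subset_univ S.leaves)
    simpa using this
  rw [S.card_leaves] at h1
  omega

end Stmt7Main

/-- From a `(k-1)`-chromatic 3-star system one obtains a `k`-chromatic 3-star system. -/
theorem stmt7 (k : ℕ) (hk : 3 ≤ k)
    (h : ∃ (n : ℕ) (sys : EStarSystem n 3), Chromatic sys (k - 1)) :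
    ∃ (n : ℕ) (sys : EStarSystem n 3), Chromatic sys k := by
  obtain ⟨n, sys, hcol, hncol⟩ := h
  have he : k - 1 - 1 = k - 2 := by omega
  rw [he] at hncol
  obtain ⟨c₀, hc₀⟩ := hcol
  have hn : 0 < n := by
    rcases Nat.eq_zero_or_pos n with h0 | h0
    · exfalso
      subst h0
      exact hncol (Stmt7Main.no_stars_of_zero sys (k-2))
    · exact h0
  refine ⟨Stmt7Main.N k n, Stmt7Main.Tsys k n c₀ sys hk hn, ?_, ?_⟩
  · exact ⟨Stmt7Main.chi k n c₀, Stmt7Main.chi_weak k n c₀ sys hk hn hc₀⟩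
  · exact Stmt7Main.kill k n c₀ sys hk hn hncol
end
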